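/- arXiv:2509.08680 — 3 statements merged into one kernel-verified Lean document; each statement's English description precedes it below -/
import Mathlib

section
/- Let r > ℓ ≥ 1 and let F be an (r−ℓ)-graph. Then for all positive integers t₁,…,t_ℓ, ex(n, F(t₁,…,t_ℓ)) = O_{F,t₁,…,t_ℓ}(n^{r − 1/(s(F)·∏_{i=1}^{ℓ−1} t_i)}), i.e., there is a constant C depending only on F and t₁,…,t_ℓ such that ex(n, F(t₁,…,t_ℓ)) ≤ C · n^{r − 1/(s(F)·t₁⋯t_{ℓ−1})} for all n. -/
open Finset

/-- An `r`-uniform hypergraph on vertex type `V`: a set of edges, each an `r`-element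
subset of `V`. -/
structure HGraph (r : ℕ) (V : Type) where
  edges : Finset (Finset V)
  uniform : ∀ e ∈ edges, e.card = r

variable {r : ℕ} {α β γ : Type}

/-- The set of homomorphisms from `F` to `H`: maps sending every edge of `F` to an edge of `H`. -/
def homFinset [Fintype α] [DecidableEq α] [Fintype β] [DecidableEq β]
    (F : HGraph r α) (H : HGraph r β) : Finset (α → β) :=
  Finset.univ.filter fun φ => ∀ e ∈ F.edges, e.image φ ∈ H.edges

/-- The number of homomorphisms from `F` to `H`. -/
def homCount [Fintype α] [DecidableEq α] [Fintype β] [DecidableEq β]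
    (F : HGraph r α) (H : HGraph r β) : ℕ :=
  (homFinset F H).card

/-- The homomorphism density `t_F(H) = hom(F,H) / v(H)^{v(F)}`. -/
noncomputable def homDensity [Fintype α] [DecidableEq α] [Fintype β] [DecidableEq β]
    (F : HGraph r α) (H : HGraph r β) : ℝ :=
  (homCount F H : ℝ) / (Fintype.card β : ℝ) ^ (Fintype.card α)

/-- `K_r^{(r)}`: the `r`-graph consisting of a single edge on `r` vertices. -/
def KEdge (r : ℕ) : HGraph r (Fin r) :=
  ⟨{Finset.univ}, by intro e he; rw [Finset.mem_singleton] at he; subst he; simp⟩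

/-- Edge density of an `r`-graph, `t_{K_r^{(r)}}(H)`. -/
noncomputable def edgeDensity [Fintype β] [DecidableEq β] (H : HGraph r β) : ℝ :=
  homDensity (KEdge r) H

/-- An `r`-graph `F` is Sidorenko if `t_F(H) ≥ t_{K_r^{(r)}}(H)^{e(F)}` for all `r`-graphs `H`. -/
def IsSidorenko [Fintype α] [DecidableEq α] (F : HGraph r α) : Prop :=
  ∀ (β : Type) [Fintype β] [DecidableEq β] (H : HGraph r β),
    homDensity F H ≥ edgeDensity H ^ F.edges.card

/-- The Sidorenko exponent
`s(F) = sup {s ≥ 0 : ∃ r-graph H with t_F(H) = t_{K_r^{(r)}}(H)^s > 0}`. -/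
noncomputable def sidorenkoExp [Fintype α] [DecidableEq α] (F : HGraph r α) : ℝ :=
  sSup {s : ℝ | 0 ≤ s ∧ ∃ (n : ℕ) (H : HGraph r (Fin n)),
    homDensity F H = edgeDensity H ^ s ∧ 0 < edgeDensity H ^ s}

/-- `d_M(U)`: the number of edges of `M` containing at least one vertex of `U`. -/
def degNear [DecidableEq α] (M : HGraph r α) (U : Finset α) : ℕ :=
  (M.edges.filter fun e => ∃ v ∈ U, v ∈ e).card

/-- The set of vertices appearing in some edge of a given edge set. -/
def edgeSupport [DecidableEq α] (Es : Finset (Finset α)) : Finset α :=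
  Es.biUnion id
/-- Given `(r-1)`-uniform edge sets `E i` (the prescribed link hypergraphs of the `t`
vertices of the `r`-th part), the `r`-graph on `α ⊕ Fin t` whose link profile is
`(E 0, …, E (t-1))`. -/
def linkCone {k t : ℕ} {α : Type} [DecidableEq α] (E : Fin t → Finset (Finset α))
    (hE : ∀ i, ∀ f ∈ E i, f.card = k) : HGraph (k + 1) (α ⊕ Fin t) where
  edges := Finset.univ.biUnion fun i : Fin t =>
    (E i).image fun f => insert (Sum.inr i) (f.image Sum.inl)
  uniform := by
    intro e he
    simp only [Finset.mem_biUnion, Finset.mem_image] at he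
    obtain ⟨i, -, f, hf, rfl⟩ := he
    rw [Finset.card_insert_of_notMem (by simp),
      Finset.card_image_of_injective _ Sum.inl_injective, hE i f hf]
/-- `F(t)`: the `r`-graph obtained from the `(r−1)`-graph `F` by adding `t` new
vertices, each of whose link hypergraph is `F`. -/
def HGraph.cone {k : ℕ} {α : Type} [DecidableEq α] (F : HGraph k α) (t : ℕ) :
    HGraph (k + 1) (α ⊕ Fin t) :=
  linkCone (fun _ : Fin t => F.edges) (fun _ f hf => F.uniform f hf)
/-- `H` contains a copy of `G` as a sub-hypergraph. -/
def HGraph.ContainsCopy [DecidableEq β] (H : HGraph r β) (G : HGraph r γ) : Prop :=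
  ∃ φ : γ → β, Function.Injective φ ∧ ∀ e ∈ G.edges, e.image φ ∈ H.edges

/-- The extremal (Turán) number `ex(n, G)`: the maximum number of edges of an
`n`-vertex `r`-graph containing no sub-hypergraph isomorphic to `G`. -/
noncomputable def exNum {γ : Type} (n : ℕ) (G : HGraph r γ) : ℕ :=
  sSup {m : ℕ | ∃ H : HGraph r (Fin n), H.edges.card = m ∧ ¬ H.ContainsCopy G}

/-- A hypergraph bundled with its uniformity and (finite) vertex type. -/
structure BHG where
  r : ℕ
  V : Type
  fin : Fintype V
  deq : DecidableEq V
  G : HGraph r V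

/-- The coning operation `F ↦ F(t)` on bundled hypergraphs. -/
def BHG.cone (b : BHG) (t : ℕ) : BHG := by
  letI := b.fin; letI := b.deq
  exact ⟨b.r + 1, b.V ⊕ Fin t, inferInstance, inferInstance, b.G.cone t⟩

/-- The iterated coning `F ↦ F(t₁, …, t_ℓ)`. -/
def BHG.coneIter (b : BHG) (ts : List ℕ) : BHG := ts.foldl BHG.cone b

/-- The extremal number of a bundled hypergraph. -/
noncomputable def BHG.exNum (b : BHG) (n : ℕ) : ℕ := by
  letI := b.fin; letI := b.deq
  exact _root_.exNum n b.G

namespace Stmt9Aux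
open Finset Real
set_option linter.unusedSectionVars false

variable {r k : ℕ} {α β γ : Type}

section Basic
variable [Fintype α] [DecidableEq α] [Fintype β] [DecidableEq β]

lemma homCount_le (F : HGraph r α) (H : HGraph r β) :
    homCount F H ≤ Fintype.card β ^ Fintype.card α := by
  classical
  calc homCount F H ≤ (univ : Finset (α → β)).card := Finset.card_filter_le _ _
  _ = Fintype.card β ^ Fintype.card α := by rw [Finset.card_univ, Fintype.card_fun]

lemma homDensity_nonneg (F : HGraph r α) (H : HGraph r β) : 0 ≤ homDensity F H := by
  unfold homDensity; positivity

lemma homDensity_le_one (F : HGraph r α) (H : HGraph r β) : homDensity F H ≤ 1 := by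
  unfold homDensity
  apply div_le_one_of_le₀
  · exact_mod_cast homCount_le F H
  · positivity

lemma edgeDensity_nonneg (H : HGraph r β) : 0 ≤ edgeDensity H := homDensity_nonneg _ _

lemma edgeDensity_le_one (H : HGraph r β) : edgeDensity H ≤ 1 := homDensity_le_one _ _

lemma mem_homFinset {F : HGraph r α} {H : HGraph r β} {φ : α → β} :
    φ ∈ homFinset F H ↔ ∀ e ∈ F.edges, e.image φ ∈ H.edges := by
  simp [homFinset]

lemma mem_homFinset_KEdge {H : HGraph r β} {ψ : Fin r → β} :
    ψ ∈ homFinset (KEdge r) H ↔ (univ : Finset (Fin r)).image ψ ∈ H.edges := by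
  simp [homFinset, KEdge]

/-- From a finset of card `r`, get an injective enumeration by `Fin r`. -/
lemma exists_enum {s : Finset β} (hs : s.card = r) :
    ∃ u : Fin r → β, Function.Injective u ∧ (univ : Finset (Fin r)).image u = s := by
  classical
  have hcard : Fintype.card {x // x ∈ s} = r := by rw [Fintype.card_coe, hs]
  let e : {x // x ∈ s} ≃ Fin r := Fintype.equivFinOfCardEq hcard
  refine ⟨fun i => (e.symm i : β), ?_, ?_⟩
  · intro i j hij
    have : (e.symm i : {x // x ∈ s}) = e.symm j := Subtype.ext hij
    simpa using congrArg e this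
  · ext x
    simp only [Finset.mem_image, Finset.mem_univ, true_and]
    constructor
    · rintro ⟨i, rfl⟩; exact (e.symm i).2
    · intro hx; exact ⟨e ⟨x, hx⟩, by simp⟩

end Basic
end Stmt9Aux

namespace Stmt9Aux
open Finset Real
set_option linter.unusedSectionVars false

variable {r k : ℕ} {α β γ : Type}

section Dom
variable [Fintype α] [DecidableEq α] [Fintype β] [DecidableEq β]

lemma homCount_le_KEdge_mul (F : HGraph r α) (H : HGraph r β) {f₀ : Finset α}
    (hf₀ : f₀ ∈ F.edges) :
    homCount F H ≤ homCount (KEdge r) H * Fintype.card β ^ (Fintype.card α - r) := by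
  classical
  obtain ⟨u, hu_inj, hu_img⟩ := exists_enum (F.uniform f₀ hf₀)
  have hcard : Fintype.card ({x : α // x ∉ f₀} → β) = Fintype.card β ^ (Fintype.card α - r) := by
    rw [Fintype.card_fun]
    congr 1
    rw [Fintype.card_subtype_compl, Fintype.card_coe, F.uniform f₀ hf₀]
  calc homCount F H
      ≤ (homFinset (KEdge r) H ×ˢ (univ : Finset ({x : α // x ∉ f₀} → β))).card := by
        apply Finset.card_le_card_of_injOn
          (fun φ => (φ ∘ u, fun x => φ x.1))
        · intro φ hφ
          rw [Finset.mem_coe, Finset.mem_product]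
          constructor
          · rw [mem_homFinset_KEdge]
            have : (univ : Finset (Fin r)).image (φ ∘ u) = f₀.image φ := by
              rw [← hu_img, Finset.image_image]
            rw [this]
            exact (mem_homFinset.1 hφ) f₀ hf₀
          · exact Finset.mem_univ _
        · intro φ _ φ' _ h
          have h1 : φ ∘ u = φ' ∘ u := congrArg Prod.fst h
          have h2 : (fun x : {x : α // x ∉ f₀} => φ x.1) = fun x => φ' x.1 :=
            congrArg Prod.snd h
          funext x
          by_cases hx : x ∈ f₀
          · obtain ⟨i, _, hi⟩ := Finset.mem_image.1 (hu_img ▸ hx)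
            calc φ x = (φ ∘ u) i := by rw [Function.comp_apply, hi]
            _ = (φ' ∘ u) i := by rw [h1]
            _ = φ' x := by rw [Function.comp_apply, hi]
          · exact congrFun h2 ⟨x, hx⟩
    _ = homCount (KEdge r) H * Fintype.card β ^ (Fintype.card α - r) := by
        rw [Finset.card_product, Finset.card_univ, hcard]; rfl

lemma homDensity_le_edgeDensity (hr : 1 ≤ r) (F : HGraph r α) (H : HGraph r β)
    {f₀ : Finset α} (hf₀ : f₀ ∈ F.edges) :
    homDensity F H ≤ edgeDensity H := by
  classical
  have hra : r ≤ Fintype.card α := by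
    rw [← F.uniform f₀ hf₀]; exact Finset.card_le_univ f₀
  rcases Nat.eq_zero_or_pos (Fintype.card β) with hβ | hβ
  · have h0 : homCount F H = 0 := by
      have hα : 0 < Fintype.card α := lt_of_lt_of_le hr hra
      have h := homCount_le F H
      rw [hβ, zero_pow hα.ne'] at h
      omega
    unfold homDensity
    rw [h0]
    simpa using edgeDensity_nonneg H
  · have hb : (0:ℝ) < (Fintype.card β : ℝ) := by exact_mod_cast hβ
    unfold edgeDensity homDensity
    rw [div_le_div_iff₀ (by positivity) (by positivity)]
    have hsplit : (Fintype.card β : ℝ) ^ (Fintype.card α)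
        = (Fintype.card β : ℝ) ^ (Fintype.card α - r) * (Fintype.card β : ℝ) ^ r := by
      rw [← pow_add, Nat.sub_add_cancel hra]
    rw [hsplit, Fintype.card_fin]
    have : (homCount F H : ℝ) ≤ (homCount (KEdge r) H : ℝ) * (Fintype.card β : ℝ) ^ (Fintype.card α - r) := by
      exact_mod_cast homCount_le_KEdge_mul F H hf₀
    calc (homCount F H : ℝ) * (Fintype.card β : ℝ) ^ r
        ≤ ((homCount (KEdge r) H : ℝ) * (Fintype.card β : ℝ) ^ (Fintype.card α - r)) * (Fintype.card β : ℝ) ^ r := by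
          apply mul_le_mul_of_nonneg_right this (by positivity)
      _ = (homCount (KEdge r) H : ℝ) * ((Fintype.card β : ℝ) ^ (Fintype.card α - r) * (Fintype.card β : ℝ) ^ r) := by ring

lemma card_edges_le_homCount (H : HGraph r β) : H.edges.card ≤ homCount (KEdge r) H := by
  classical
  rcases H.edges.eq_empty_or_nonempty with h | ⟨e₀, he₀⟩
  · simp [h]
  obtain ⟨u₀, -, -⟩ := exists_enum (H.uniform e₀ he₀)
  set pick : Finset β → (Fin r → β) :=
    fun e => if h : e.card = r then Classical.choose (exists_enum (β := β) h) else u₀ with hpick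
  have hspec : ∀ e ∈ H.edges, Function.Injective (pick e) ∧ (univ.image (pick e)) = e := by
    intro e he
    have h : e.card = r := H.uniform e he
    rw [hpick]
    simp only [dif_pos h]
    exact ⟨(Classical.choose_spec (exists_enum h)).1, (Classical.choose_spec (exists_enum h)).2⟩
  apply Finset.card_le_card_of_injOn pick
  · intro e he
    rw [Finset.mem_coe, mem_homFinset_KEdge, (hspec e he).2]
    exact he
  · intro e he e' he' h
    rw [← (hspec e (by exact he)).2, ← (hspec e' (by exact he')).2, h]

end Dom
end Stmt9Aux

namespace Stmt9Aux
open Finset Real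
set_option linter.unusedSectionVars false
set_option maxHeartbeats 1000000

variable {r k : ℕ} {α β γ : Type}

section Link
variable [Fintype α] [DecidableEq α] [Fintype β] [DecidableEq β]

/-- The link of a vertex in a `(k+1)`-graph. -/
def link (H : HGraph (k+1) β) (v : β) : HGraph k β :=
  ⟨(H.edges.filter fun e => v ∈ e).image fun e => e.erase v, by
    intro e he
    simp only [Finset.mem_image, Finset.mem_filter] at he
    obtain ⟨e', ⟨h1, h2⟩, rfl⟩ := he
    rw [Finset.card_erase_of_mem h2, H.uniform e' h1]
    omega⟩

lemma mem_link_iff {H : HGraph (k+1) β} {v : β} {X : Finset β} (hX : X.card ≤ k) :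
    X ∈ (link H v).edges ↔ insert v X ∈ H.edges := by
  constructor
  · intro h
    simp only [link, Finset.mem_image, Finset.mem_filter] at h
    obtain ⟨e, ⟨he, hv⟩, rfl⟩ := h
    rwa [Finset.insert_erase hv]
  · intro h
    have hv : v ∉ X := by
      intro hv
      have hc := H.uniform _ h
      rw [Finset.insert_eq_self.2 hv] at hc
      omega
    simp only [link, Finset.mem_image, Finset.mem_filter]
    exact ⟨insert v X, ⟨h, Finset.mem_insert_self _ _⟩, Finset.erase_insert hv⟩

/-- The "good vertex set" of a map `φ`. -/
def good (J : HGraph k α) (H : HGraph (k+1) β) (φ : α → β) : Finset β :=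
  univ.filter fun v => ∀ f ∈ J.edges, insert v (f.image φ) ∈ H.edges

lemma mem_good_iff_hom {J : HGraph k α} {H : HGraph (k+1) β} {φ : α → β} {v : β} :
    v ∈ good J H φ ↔ φ ∈ homFinset J (link H v) := by
  simp only [good, homFinset, Finset.mem_filter, Finset.mem_univ, true_and]
  apply forall₂_congr
  intro f hf
  rw [mem_link_iff (Finset.card_image_le.trans (le_of_eq (J.uniform f hf)))]

lemma sum_good_card (J : HGraph k α) (H : HGraph (k+1) β) :
    ∑ φ : α → β, (good J H φ).card = ∑ v : β, homCount J (link H v) := by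
  classical
  have l : ∀ φ : α → β, (good J H φ).card = ∑ v : β, if φ ∈ homFinset J (link H v) then 1 else 0 := by
    intro φ
    rw [good, Finset.card_filter]
    apply Finset.sum_congr rfl
    intro v _
    congr 1
    rw [← mem_good_iff_hom (φ := φ) (v := v)]
    simp [good]
  have rr : ∀ v : β, homCount J (link H v) = ∑ φ : α → β, if φ ∈ homFinset J (link H v) then 1 else 0 := by
    intro v
    rw [homCount, homFinset, Finset.card_filter]
    apply Finset.sum_congr rfl
    intro φ _
    congr 1
    simp [homFinset]
  simp only [l, rr]
  exact Finset.sum_comm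

lemma homFinset_KEdge_eq (L : HGraph k β) :
    homFinset (KEdge k) L = univ.filter (fun ψ : Fin k → β => (univ : Finset (Fin k)).image ψ ∈ L.edges) := by
  ext ψ
  simp [homFinset, KEdge]

lemma image_univ_cons (v : β) (χ : Fin k → β) :
    (univ : Finset (Fin (k+1))).image (Fin.cons v χ) = insert v ((univ : Finset (Fin k)).image χ) := by
  ext x
  simp only [Finset.mem_image, Finset.mem_insert, Finset.mem_univ, true_and]
  rw [Fin.exists_fin_succ]
  simp only [Fin.cons_zero, Fin.cons_succ]
  tauto

lemma sum_homCount_KEdge_link (H : HGraph (k+1) β) :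
    ∑ v : β, homCount (KEdge k) (link H v) = homCount (KEdge (k+1)) H := by
  classical
  have l : ∀ v : β, homCount (KEdge k) (link H v)
      = ∑ χ : Fin k → β, if insert v ((univ : Finset (Fin k)).image χ) ∈ H.edges then 1 else 0 := by
    intro v
    rw [homCount, homFinset_KEdge_eq, Finset.card_filter]
    apply Finset.sum_congr rfl
    intro χ _
    apply if_congr _ rfl rfl
    exact mem_link_iff (Finset.card_image_le.trans (by simp))
  simp only [l]
  rw [homCount, homFinset_KEdge_eq, Finset.card_filter]
  calc ∑ v : β, ∑ χ : Fin k → β, (if insert v ((univ : Finset (Fin k)).image χ) ∈ H.edges then 1 else 0)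
      = ∑ p : β × (Fin k → β), (if insert p.1 ((univ : Finset (Fin k)).image p.2) ∈ H.edges then 1 else 0) := by
        rw [Fintype.sum_prod_type]
    _ = ∑ ψ : Fin (k+1) → β, (if (univ : Finset (Fin (k+1))).image ψ ∈ H.edges then 1 else 0) := by
        apply Fintype.sum_equiv (Fin.consEquiv (fun _ => β))
        intro p
        apply if_congr _ rfl rfl
        rw [show ((Fin.consEquiv (fun _ => β)) p : Fin (k+1) → β) = Fin.cons p.1 p.2 from rfl]
        rw [image_univ_cons]
    _ = _ := rfl

lemma homCount_cone (J : HGraph k α) (t : ℕ) (H : HGraph (k+1) β) :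
    homCount (J.cone t) H = ∑ φ : α → β, (good J H φ).card ^ t := by
  classical
  have memiff : ∀ ψ : α ⊕ Fin t → β,
      (∀ e ∈ (J.cone t).edges, e.image ψ ∈ H.edges) ↔
        ∀ i : Fin t, ψ (Sum.inr i) ∈ good J H (ψ ∘ Sum.inl) := by
    intro ψ
    constructor
    · intro h i
      rw [good, Finset.mem_filter]
      refine ⟨Finset.mem_univ _, fun f hf => ?_⟩
      have he : insert (Sum.inr i) (f.image Sum.inl) ∈ (J.cone t).edges := by
        simp only [HGraph.cone, linkCone, Finset.mem_biUnion, Finset.mem_univ, true_and,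
          Finset.mem_image]
        exact ⟨i, f, hf, rfl⟩
      have h2 := h _ he
      rwa [Finset.image_insert, Finset.image_image] at h2
    · intro h e he
      simp only [HGraph.cone, linkCone, Finset.mem_biUnion, Finset.mem_univ, true_and,
        Finset.mem_image] at he
      obtain ⟨i, f, hf, rfl⟩ := he
      rw [Finset.image_insert, Finset.image_image]
      have h2 := h i
      rw [good, Finset.mem_filter] at h2
      exact h2.2 f hf
  rw [homCount, homFinset, Finset.card_filter]
  have inner : ∀ φ : α → β,
      (∑ g : Fin t → β, if (∀ i, g i ∈ good J H φ) then 1 else 0) = (good J H φ).card ^ t := by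
    intro φ
    rw [← Finset.card_filter]
    have hpi : (univ.filter fun g : Fin t → β => ∀ i, g i ∈ good J H φ)
        = Fintype.piFinset (fun _ : Fin t => good J H φ) := by
      ext g
      simp [Fintype.mem_piFinset]
    rw [hpi, Fintype.card_piFinset]
    simp
  calc ∑ ψ : α ⊕ Fin t → β, (if ∀ e ∈ (J.cone t).edges, e.image ψ ∈ H.edges then 1 else 0)
      = ∑ p : (α → β) × (Fin t → β), (if ∀ i : Fin t, p.2 i ∈ good J H p.1 then 1 else 0) := by
        apply Fintype.sum_equiv (Equiv.sumArrowEquivProdArrow α (Fin t) β)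
        intro ψ
        exact if_congr (memiff ψ) rfl rfl
    _ = ∑ φ : α → β, ∑ g : Fin t → β, (if ∀ i : Fin t, g i ∈ good J H φ then 1 else 0) := by
        rw [Fintype.sum_prod_type]
    _ = ∑ φ : α → β, (good J H φ).card ^ t := by
        exact Finset.sum_congr rfl fun φ _ => inner φ

variable [Fintype γ] [DecidableEq γ]

/-- Relabel a hypergraph along an equivalence of vertex types. -/
def relabel (H : HGraph r β) (e : β ≃ γ) : HGraph r γ :=
  ⟨H.edges.image (fun s => s.image e), by
    intro s hs
    simp only [Finset.mem_image] at hs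
    obtain ⟨s', h, rfl⟩ := hs
    rw [Finset.card_image_of_injective _ e.injective]
    exact H.uniform _ h⟩

lemma mem_relabel {H : HGraph r β} {e : β ≃ γ} {X : Finset β} :
    X.image (e : β → γ) ∈ (relabel H e).edges ↔ X ∈ H.edges := by
  simp only [relabel, Finset.mem_image]
  constructor
  · rintro ⟨s', h, hEq⟩
    have : s' = X := by
      have hinj : Function.Injective (Finset.image (e : β → γ)) :=
        Finset.image_injective e.injective
      exact hinj hEq
    rwa [← this]
  · intro h
    exact ⟨X, h, rfl⟩

lemma homCount_relabel (F : HGraph r α) (H : HGraph r β) (e : β ≃ γ) :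
    homCount F (relabel H e) = homCount F H := by
  classical
  apply Finset.card_nbij' (fun φ => (e.symm : γ → β) ∘ φ) (fun φ => (e : β → γ) ∘ φ)
  · intro φ hφ
    rw [Finset.mem_coe, mem_homFinset] at hφ ⊢
    intro f hf
    have h2 := hφ f hf
    have himg : f.image ((e.symm : γ → β) ∘ φ) = (f.image φ).image (e.symm : γ → β) := by
      rw [Finset.image_image]
    rw [himg]
    have h3 : ((f.image φ).image (e.symm : γ → β)).image (e : β → γ) = f.image φ := by
      rw [Finset.image_image]
      have : (e : β → γ) ∘ (e.symm : γ → β) = id := by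
        funext x; simp
      rw [this, Finset.image_id]
    rw [← mem_relabel (e := e), h3]
    exact h2
  · intro φ hφ
    rw [Finset.mem_coe, mem_homFinset] at hφ ⊢
    intro f hf
    have himg : f.image ((e : β → γ) ∘ φ) = (f.image φ).image (e : β → γ) := by
      rw [Finset.image_image]
    rw [himg, mem_relabel]
    exact hφ f hf
  · intro φ _; funext x; simp
  · intro φ _; funext x; simp

lemma homDensity_relabel (F : HGraph r α) (H : HGraph r β) (e : β ≃ γ) :
    homDensity F (relabel H e) = homDensity F H := by
  unfold homDensity
  rw [homCount_relabel, Fintype.card_congr e.symm]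

lemma edgeDensity_relabel (H : HGraph r β) (e : β ≃ γ) :
    edgeDensity (relabel H e) = edgeDensity H := by
  unfold edgeDensity
  exact homDensity_relabel _ _ _

/-- The Sidorenko property with exponent `σ`. -/
def Sid {k : ℕ} {α : Type} [Fintype α] [DecidableEq α] (J : HGraph k α) (σ : ℝ) : Prop :=
  ∀ (n : ℕ) (L : HGraph k (Fin n)), edgeDensity L ^ σ ≤ homDensity J L

lemma sid_cone {J : HGraph k α} {σ : ℝ} (hS : Sid J σ) (hσ : 1 ≤ σ) {t : ℕ} (ht : 1 ≤ t) :
    Sid (J.cone t) (σ * t) := by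
  classical
  intro n H
  set a := Fintype.card α with ha
  have hσt : (1:ℝ) ≤ σ * t := by
    calc (1:ℝ) ≤ σ := hσ
    _ = σ * 1 := (mul_one σ).symm
    _ ≤ σ * t := by
        apply mul_le_mul_of_nonneg_left _ (le_trans zero_le_one hσ)
        exact_mod_cast ht
  have hcardsum : Fintype.card (α ⊕ Fin t) = a + t := by simp [ha]
  rcases Nat.eq_zero_or_pos n with rfl | hn
  · have hE : IsEmpty (Fin (k+1) → Fin 0) := by infer_instance
    have hd : edgeDensity H = 0 := by
      unfold edgeDensity homDensity
      rw [homCount, homFinset, Finset.univ_eq_empty, Finset.filter_empty, Finset.card_empty]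
      simp
    rw [hd, Real.zero_rpow (by linarith)]
    exact homDensity_nonneg _ _
  obtain ⟨s, rfl⟩ : ∃ s, t = s + 1 := ⟨t - 1, by omega⟩
  have hN : (0:ℝ) < (n:ℝ) := by exact_mod_cast hn
  have hd0 : 0 ≤ edgeDensity H := edgeDensity_nonneg H
  -- Key 3 : per-vertex lower bound via Sid
  have key3 : ∀ v : Fin n,
      (n:ℝ)^a * edgeDensity (link H v) ^ σ ≤ (homCount J (link H v) : ℝ) := by
    intro v
    have h := hS n (link H v)
    unfold homDensity at h
    rw [Fintype.card_fin] at h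
    rw [mul_comm]
    exact (le_div_iff₀ (by positivity)).1 h
  -- Key 4 : link densities sum to n * edgeDensity
  have key4 : ∑ v : Fin n, edgeDensity (link H v) = (n:ℝ) * edgeDensity H := by
    have hcast : ∑ v : Fin n, (homCount (KEdge k) (link H v) : ℝ)
        = (homCount (KEdge (k+1)) H : ℝ) := by
      exact_mod_cast congrArg (fun x : ℕ => (x:ℝ)) (sum_homCount_KEdge_link H)
    calc ∑ v : Fin n, edgeDensity (link H v)
        = ∑ v : Fin n, (homCount (KEdge k) (link H v) : ℝ) / (n:ℝ)^k := by
          apply Finset.sum_congr rfl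
          intro v _
          unfold edgeDensity homDensity
          rw [Fintype.card_fin, Fintype.card_fin]
      _ = (homCount (KEdge (k+1)) H : ℝ) / (n:ℝ)^k := by rw [← Finset.sum_div, hcast]
      _ = (n:ℝ) * edgeDensity H := by
          unfold edgeDensity homDensity
          rw [Fintype.card_fin, Fintype.card_fin]
          rw [pow_succ]
          field_simp
  -- Key 5 : Jensen
  have key5 : (n:ℝ) * edgeDensity H ^ σ ≤ ∑ v : Fin n, edgeDensity (link H v) ^ σ := by
    have hjen := Real.rpow_arith_mean_le_arith_mean_rpow (univ : Finset (Fin n))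
      (fun _ => 1/(n:ℝ)) (fun v => edgeDensity (link H v))
      (fun i _ => by positivity)
      (by rw [Finset.sum_const, Finset.card_univ, Fintype.card_fin, nsmul_eq_mul]; field_simp)
      (fun i _ => edgeDensity_nonneg _) hσ
    have h1 : ∑ v ∈ (univ : Finset (Fin n)), (1/(n:ℝ)) * edgeDensity (link H v)
        = edgeDensity H := by
      rw [← Finset.mul_sum, key4]
      field_simp
    have h2 : ∑ v ∈ (univ : Finset (Fin n)), (1/(n:ℝ)) * edgeDensity (link H v) ^ σ
        = (1/(n:ℝ)) * ∑ v : Fin n, edgeDensity (link H v) ^ σ := by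
      rw [Finset.mul_sum]
    rw [h1, h2] at hjen
    have := mul_le_mul_of_nonneg_left hjen (le_of_lt hN)
    calc (n:ℝ) * edgeDensity H ^ σ ≤ (n:ℝ) * ((1/(n:ℝ)) * ∑ v : Fin n, edgeDensity (link H v) ^ σ) := this
    _ = ∑ v : Fin n, edgeDensity (link H v) ^ σ := by field_simp
  -- Key 6
  have key6 : (n:ℝ)^(a + 1) * edgeDensity H ^ σ ≤ ∑ φ : α → Fin n, ((good J H φ).card : ℝ) := by
    have hgood : ∑ φ : α → Fin n, ((good J H φ).card : ℝ)
        = ∑ v : Fin n, (homCount J (link H v) : ℝ) := by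
      exact_mod_cast congrArg (fun x : ℕ => (x:ℝ)) (sum_good_card J H)
    rw [hgood]
    calc (n:ℝ)^(a+1) * edgeDensity H ^ σ = (n:ℝ)^a * ((n:ℝ) * edgeDensity H ^ σ) := by
          rw [pow_succ]; ring
      _ ≤ (n:ℝ)^a * ∑ v : Fin n, edgeDensity (link H v) ^ σ := by
          apply mul_le_mul_of_nonneg_left key5 (by positivity)
      _ = ∑ v : Fin n, (n:ℝ)^a * edgeDensity (link H v) ^ σ := by rw [Finset.mul_sum]
      _ ≤ ∑ v : Fin n, (homCount J (link H v) : ℝ) := Finset.sum_le_sum (fun v _ => key3 v)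
  -- Key 7 : power mean
  have hcard : (((univ : Finset (α → Fin n))).card : ℝ) = (n:ℝ)^a := by
    rw [Finset.card_univ, Fintype.card_fun, Fintype.card_fin]
    push_cast
    rfl
  have key7 : (∑ φ : α → Fin n, ((good J H φ).card : ℝ)) ^ (s+1) / ((n:ℝ)^a) ^ s
      ≤ ∑ φ : α → Fin n, ((good J H φ).card : ℝ) ^ (s+1) := by
    have h := pow_sum_div_card_le_sum_pow
      (s := (univ : Finset (α → Fin n)))
      (f := fun φ : α → Fin n => ((good J H φ).card : ℝ)) (fun i _ => by positivity) s
    rwa [hcard] at h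
  -- assemble
  unfold homDensity
  rw [Fintype.card_fin, hcardsum]
  rw [le_div_iff₀ (by positivity)]
  have hcount : (homCount (J.cone (s+1)) H : ℝ)
      = ∑ φ : α → Fin n, ((good J H φ).card : ℝ) ^ (s+1) := by
    rw [homCount_cone]
    push_cast
    rfl
  rw [hcount]
  have hstep1 : ((n:ℝ)^(a+1) * edgeDensity H ^ σ) ^ (s+1) / ((n:ℝ)^a) ^ s
      ≤ (∑ φ : α → Fin n, ((good J H φ).card : ℝ)) ^ (s+1) / ((n:ℝ)^a) ^ s := by
    have hnum := pow_le_pow_left₀ (by positivity : (0:ℝ) ≤ (n:ℝ)^(a+1) * edgeDensity H ^ σ)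
      key6 (s+1)
    exact div_le_div_of_nonneg_right hnum (by positivity)
  have hstep2 := hstep1.trans key7
  have hd0' : 0 ≤ edgeDensity H ^ σ := Real.rpow_nonneg hd0 σ
  have halg : ((n:ℝ)^(a+1) * edgeDensity H ^ σ) ^ (s+1) / ((n:ℝ)^a) ^ s
      = edgeDensity H ^ (σ * ((s+1 : ℕ) : ℝ)) * (n:ℝ) ^ (a + (s+1)) := by
    rw [mul_pow, ← pow_mul, ← pow_mul]
    rw [← Real.rpow_natCast (edgeDensity H ^ σ) (s+1), ← Real.rpow_mul hd0]
    rw [show (a+1)*(s+1) = a*s + (a + (s+1)) by ring, pow_add]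
    field_simp
  rw [← halg]
  exact hstep2

lemma card_filter_apply_mem (u : α) (T : Finset β) :
    (univ.filter fun φ : α → β => φ u ∈ T).card
      ≤ T.card * Fintype.card β ^ (Fintype.card α - 1) := by
  classical
  have hcard : Fintype.card ({x : α // x ≠ u} → β) = Fintype.card β ^ (Fintype.card α - 1) := by
    rw [Fintype.card_fun]
    congr 1
    have : Fintype.card {x : α // x = u} = 1 := Fintype.card_subtype_eq u
    rw [Fintype.card_subtype_compl, this]
  calc (univ.filter fun φ : α → β => φ u ∈ T).card
      ≤ (T ×ˢ (univ : Finset ({x : α // x ≠ u} → β))).card := by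
        apply Finset.card_le_card_of_injOn (fun φ => (φ u, fun x => φ x.1))
        · intro φ hφ
          rw [Finset.mem_coe, Finset.mem_filter] at hφ
          exact Finset.mem_product.2 ⟨hφ.2, Finset.mem_univ _⟩
        · intro φ _ φ' _ h
          have h1 : φ u = φ' u := congrArg Prod.fst h
          have h2 : (fun x : {x : α // x ≠ u} => φ x.1) = fun x => φ' x.1 := congrArg Prod.snd h
          funext x
          by_cases hx : x = u
          · rw [hx]; exact h1
          · exact congrFun h2 ⟨x, hx⟩
    _ = T.card * Fintype.card β ^ (Fintype.card α - 1) := by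
        rw [Finset.card_product, Finset.card_univ, hcard]

lemma card_noninj_le :
    (univ.filter fun φ : α → β => ¬ Function.Injective φ).card
      ≤ Fintype.card α * Fintype.card α * Fintype.card β ^ (Fintype.card α - 1) := by
  classical
  have hsub : (univ.filter fun φ : α → β => ¬ Function.Injective φ)
      ⊆ (univ : Finset α).offDiag.biUnion
          (fun p => univ.filter fun φ : α → β => φ p.1 = φ p.2) := by
    intro φ hφ
    rw [Finset.mem_filter] at hφ
    obtain ⟨x, y, hxy, hne⟩ := Function.not_injective_iff.1 hφ.2
    exact Finset.mem_biUnion.2 ⟨(x,y), Finset.mem_offDiag.2 ⟨Finset.mem_univ _, Finset.mem_univ _, hne⟩,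
      Finset.mem_filter.2 ⟨Finset.mem_univ _, hxy⟩⟩
  have hpair : ∀ p : α × α, p ∈ (univ : Finset α).offDiag →
      (univ.filter fun φ : α → β => φ p.1 = φ p.2).card
        ≤ Fintype.card β ^ (Fintype.card α - 1) := by
    rintro ⟨x, y⟩ hp
    have hne : x ≠ y := (Finset.mem_offDiag.1 hp).2.2
    have hcard : Fintype.card ({z : α // z ≠ y} → β) = Fintype.card β ^ (Fintype.card α - 1) := by
      rw [Fintype.card_fun]
      congr 1
      have : Fintype.card {z : α // z = y} = 1 := Fintype.card_subtype_eq y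
      rw [Fintype.card_subtype_compl, this]
    calc (univ.filter fun φ : α → β => φ x = φ y).card
        ≤ (univ : Finset ({z : α // z ≠ y} → β)).card := by
          apply Finset.card_le_card_of_injOn (fun φ => fun z => φ z.1)
          · intro φ _; exact Finset.mem_univ _
          · intro φ hφ φ' hφ' h
            rw [Finset.mem_coe, Finset.mem_filter] at hφ hφ'
            funext z
            by_cases hz : z = y
            · rw [hz, ← hφ.2, ← hφ'.2]
              exact congrFun h ⟨x, hne⟩
            · exact congrFun h ⟨z, hz⟩
      _ = Fintype.card β ^ (Fintype.card α - 1) := by rw [Finset.card_univ, hcard]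
  calc (univ.filter fun φ : α → β => ¬ Function.Injective φ).card
      ≤ ((univ : Finset α).offDiag.biUnion
          (fun p => univ.filter fun φ : α → β => φ p.1 = φ p.2)).card :=
        Finset.card_le_card hsub
    _ ≤ ∑ p ∈ (univ : Finset α).offDiag, (univ.filter fun φ : α → β => φ p.1 = φ p.2).card :=
        Finset.card_biUnion_le
    _ ≤ ∑ _p ∈ (univ : Finset α).offDiag, Fintype.card β ^ (Fintype.card α - 1) :=
        Finset.sum_le_sum hpair
    _ = (univ : Finset α).offDiag.card * Fintype.card β ^ (Fintype.card α - 1) := by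
        rw [Finset.sum_const, smul_eq_mul]
    _ ≤ Fintype.card α * Fintype.card α * Fintype.card β ^ (Fintype.card α - 1) := by
        apply Nat.mul_le_mul_right
        rw [Finset.offDiag_card, Finset.card_univ]
        exact Nat.sub_le _ _

lemma link_hom_lower {J : HGraph k α} {σ : ℝ} (hS : Sid J σ) {n : ℕ}
    (H : HGraph (k+1) (Fin n)) (v : Fin n) :
    (n:ℝ)^(Fintype.card α) * edgeDensity (link H v) ^ σ ≤ (homCount J (link H v) : ℝ) := by
  rcases eq_or_lt_of_le (by positivity : (0:ℝ) ≤ (n:ℝ)^(Fintype.card α)) with h0 | hpos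
  · rw [← h0, zero_mul]
    positivity
  · have h := hS n (link H v)
    unfold homDensity at h
    rw [Fintype.card_fin] at h
    rw [mul_comm]
    exact (le_div_iff₀ hpos).1 h

lemma sum_link_edgeDensity {n : ℕ} (hn : 0 < n) (H : HGraph (k+1) (Fin n)) :
    ∑ v : Fin n, edgeDensity (link H v) = (n:ℝ) * edgeDensity H := by
  have hcast : ∑ v : Fin n, (homCount (KEdge k) (link H v) : ℝ)
      = (homCount (KEdge (k+1)) H : ℝ) := by
    exact_mod_cast congrArg (fun x : ℕ => (x:ℝ)) (sum_homCount_KEdge_link H)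
  have hN : (0:ℝ) < (n:ℝ) := by exact_mod_cast hn
  calc ∑ v : Fin n, edgeDensity (link H v)
      = ∑ v : Fin n, (homCount (KEdge k) (link H v) : ℝ) / (n:ℝ)^k := by
        apply Finset.sum_congr rfl
        intro v _
        unfold edgeDensity homDensity
        rw [Fintype.card_fin, Fintype.card_fin]
    _ = (homCount (KEdge (k+1)) H : ℝ) / (n:ℝ)^k := by rw [← Finset.sum_div, hcast]
    _ = (n:ℝ) * edgeDensity H := by
        unfold edgeDensity homDensity
        rw [Fintype.card_fin, Fintype.card_fin, pow_succ]
        field_simp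

lemma sum_link_rpow_lower {σ : ℝ} (hσ : 1 ≤ σ) {n : ℕ} (hn : 0 < n)
    (H : HGraph (k+1) (Fin n)) :
    (n:ℝ) * edgeDensity H ^ σ ≤ ∑ v : Fin n, edgeDensity (link H v) ^ σ := by
  have hN : (0:ℝ) < (n:ℝ) := by exact_mod_cast hn
  have hjen := Real.rpow_arith_mean_le_arith_mean_rpow (univ : Finset (Fin n))
    (fun _ => 1/(n:ℝ)) (fun v => edgeDensity (link H v))
    (fun i _ => by positivity)
    (by rw [Finset.sum_const, Finset.card_univ, Fintype.card_fin, nsmul_eq_mul]; field_simp)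
    (fun i _ => edgeDensity_nonneg _) hσ
  have h1 : ∑ v ∈ (univ : Finset (Fin n)), (1/(n:ℝ)) * edgeDensity (link H v)
      = edgeDensity H := by
    rw [← Finset.mul_sum, sum_link_edgeDensity hn]
    field_simp
  have h2 : ∑ v ∈ (univ : Finset (Fin n)), (1/(n:ℝ)) * edgeDensity (link H v) ^ σ
      = (1/(n:ℝ)) * ∑ v : Fin n, edgeDensity (link H v) ^ σ := by
    rw [Finset.mul_sum]
  rw [h1, h2] at hjen
  have h3 := mul_le_mul_of_nonneg_left hjen (le_of_lt hN)
  calc (n:ℝ) * edgeDensity H ^ σ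
      ≤ (n:ℝ) * ((1/(n:ℝ)) * ∑ v : Fin n, edgeDensity (link H v) ^ σ) := h3
    _ = ∑ v : Fin n, edgeDensity (link H v) ^ σ := by field_simp

lemma embed_bound [Fintype γ] [DecidableEq γ] {G : HGraph k γ} {σ : ℝ} (hS : Sid G σ)
    (hσ : 1 ≤ σ) {t : ℕ} (ht : 1 ≤ t) (ha : 1 ≤ Fintype.card γ)
    (n : ℕ) (H : HGraph (k+1) (Fin n)) (hno : ¬ H.ContainsCopy (G.cone t)) :
    (H.edges.card : ℝ)
      ≤ ((Fintype.card γ * Fintype.card γ + t + Fintype.card γ + 1 : ℕ) : ℝ)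
        * (n:ℝ) ^ ((k+1 : ℝ) - 1/σ) := by
  classical
  set a := Fintype.card γ with hadef
  set C : ℕ := a * a + t + a + 1 with hCdef
  have hσ0 : 0 < σ := lt_of_lt_of_le one_pos hσ
  rcases Nat.eq_zero_or_pos n with rfl | hn
  · have hemp : H.edges = ∅ := by
      apply Finset.eq_empty_of_forall_notMem
      intro e he
      have h1 := H.uniform e he
      have h2 : e = ∅ := Finset.eq_empty_of_isEmpty e
      rw [h2] at h1
      simp at h1
    rw [hemp]
    simp only [Finset.card_empty, Nat.cast_zero, Nat.cast_ofNat]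
    positivity
  have hN : (0:ℝ) < (n:ℝ) := by exact_mod_cast hn
  by_contra hbig
  push_neg at hbig
  have hdlow : (C:ℝ) * (n:ℝ) ^ (-(1/σ)) ≤ edgeDensity H := by
    have h1 : (H.edges.card : ℝ) ≤ (homCount (KEdge (k+1)) H : ℝ) := by
      exact_mod_cast card_edges_le_homCount H
    have h2 : (C:ℝ) * (n:ℝ) ^ ((k+1:ℝ) - 1/σ) ≤ (homCount (KEdge (k+1)) H : ℝ) :=
      le_trans (le_of_lt hbig) h1
    unfold edgeDensity homDensity
    rw [Fintype.card_fin, Fintype.card_fin]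
    rw [le_div_iff₀ (by positivity)]
    calc (C:ℝ) * (n:ℝ) ^ (-(1/σ)) * (n:ℝ)^(k+1)
        = (C:ℝ) * (n:ℝ) ^ ((k+1:ℝ) - 1/σ) := by
          rw [mul_assoc, ← Real.rpow_natCast (n:ℝ) (k+1), ← Real.rpow_add hN]
          congr 2
          push_cast
          ring
      _ ≤ _ := h2
  have hd0 : 0 ≤ edgeDensity H := edgeDensity_nonneg H
  set m : (γ → Fin n) → ℕ := fun φ => (good G H φ).card with hm
  have hpowinv : ((n:ℝ) ^ (-(1/σ))) ^ σ = (n:ℝ)⁻¹ := by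
    rw [← Real.rpow_mul hN.le]
    rw [show (-(1/σ)) * σ = -1 by field_simp]
    rw [show (-1 : ℝ) = -(1:ℝ) by norm_num, Real.rpow_neg hN.le, Real.rpow_one]
  have hrp : (C:ℝ)^σ * (n:ℝ)⁻¹ ≤ edgeDensity H ^ σ := by
    have hmono := Real.rpow_le_rpow (by positivity) hdlow hσ0.le
    calc (C:ℝ)^σ * (n:ℝ)⁻¹ = ((C:ℝ) * (n:ℝ) ^ (-(1/σ))) ^ σ := by
          rw [Real.mul_rpow (by positivity) (by positivity), hpowinv]
      _ ≤ edgeDensity H ^ σ := hmono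
  have keyA : (C:ℝ) ^ σ * (n:ℝ)^a ≤ ∑ φ : γ → Fin n, (m φ : ℝ) := by
    have hgood : ∑ φ : γ → Fin n, (m φ : ℝ)
        = ∑ v : Fin n, (homCount G (link H v) : ℝ) := by
      exact_mod_cast congrArg (fun x : ℕ => (x:ℝ)) (sum_good_card G H)
    rw [hgood]
    calc (C:ℝ)^σ * (n:ℝ)^a = (n:ℝ)^a * ((n:ℝ) * ((C:ℝ)^σ * (n:ℝ)⁻¹)) := by
          field_simp
      _ ≤ (n:ℝ)^a * ((n:ℝ) * edgeDensity H ^ σ) := by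
          apply mul_le_mul_of_nonneg_left _ (by positivity)
          exact mul_le_mul_of_nonneg_left hrp hN.le
      _ ≤ (n:ℝ)^a * ∑ v : Fin n, edgeDensity (link H v) ^ σ :=
          mul_le_mul_of_nonneg_left (sum_link_rpow_lower hσ hn H) (by positivity)
      _ = ∑ v : Fin n, (n:ℝ)^a * edgeDensity (link H v) ^ σ := Finset.mul_sum _ _ _
      _ ≤ ∑ v : Fin n, (homCount G (link H v):ℝ) :=
          Finset.sum_le_sum (fun v _ => link_hom_lower hS H v)
  set NI := univ.filter fun φ : γ → Fin n => ¬ Function.Injective φ with hNI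
  have hmle : ∀ φ : γ → Fin n, m φ ≤ n := by
    intro φ
    exact (Finset.card_filter_le _ _).trans_eq (by rw [Finset.card_univ, Fintype.card_fin])
  have keyNI : ∑ φ ∈ NI, (m φ : ℝ) ≤ ((a*a : ℕ) : ℝ) * (n:ℝ)^a := by
    have h1 : ∑ φ ∈ NI, m φ ≤ NI.card * n := by
      calc ∑ φ ∈ NI, m φ ≤ ∑ _φ ∈ NI, n := Finset.sum_le_sum (fun φ _ => hmle φ)
        _ = NI.card * n := by rw [Finset.sum_const, smul_eq_mul]
    have h2 : NI.card ≤ a * a * n ^ (a - 1) := by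
      have := card_noninj_le (α := γ) (β := Fin n)
      rwa [Fintype.card_fin] at this
    have h3 : ∑ φ ∈ NI, m φ ≤ a * a * n ^ a := by
      calc ∑ φ ∈ NI, m φ ≤ (a * a * n ^ (a-1)) * n := le_trans h1 (Nat.mul_le_mul_right _ h2)
        _ = a * a * n ^ a := by
            rw [mul_assoc, ← pow_succ, Nat.sub_add_cancel ha]
    calc ∑ φ ∈ NI, (m φ : ℝ) = ((∑ φ ∈ NI, m φ : ℕ) : ℝ) := by push_cast; rfl
      _ ≤ ((a * a * n ^ a : ℕ) : ℝ) := by exact_mod_cast h3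
      _ = ((a*a : ℕ) : ℝ) * (n:ℝ)^a := by push_cast; ring
  set Inj := univ.filter fun φ : γ → Fin n => Function.Injective φ with hInjdef
  have hsplit : ∑ φ ∈ Inj, (m φ:ℝ) + ∑ φ ∈ NI, (m φ:ℝ) = ∑ φ : γ → Fin n, (m φ:ℝ) :=
    Finset.sum_filter_add_sum_filter_not univ _ _
  have hC1 : (1:ℝ) ≤ (C:ℝ) := by
    have : 1 ≤ C := by omega
    exact_mod_cast this
  have hCge : ((a*a + t + a + 1 : ℕ):ℝ) ≤ (C:ℝ)^σ := by
    calc ((a*a+t+a+1:ℕ):ℝ) = (C:ℝ) := by rw [hCdef]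
      _ = (C:ℝ)^(1:ℝ) := (Real.rpow_one _).symm
      _ ≤ (C:ℝ)^σ := Real.rpow_le_rpow_of_exponent_le hC1 hσ
  have hInj : ((t + a + 1 : ℕ):ℝ) * (n:ℝ)^a ≤ ∑ φ ∈ Inj, (m φ:ℝ) := by
    have h2 : ((a*a+t+a+1:ℕ):ℝ) * (n:ℝ)^a ≤ (C:ℝ)^σ * (n:ℝ)^a :=
      mul_le_mul_of_nonneg_right hCge (by positivity)
    have h4 := le_trans h2 keyA
    have h5 : ((a*a+t+a+1:ℕ):ℝ) = ((a*a:ℕ):ℝ) + ((t+a+1:ℕ):ℝ) := by push_cast; ring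
    rw [h5, add_mul] at h4
    linarith [keyNI, hsplit]
  have hexist : ∃ φ ∈ Inj, t + a + 1 ≤ m φ := by
    by_contra hall
    push_neg at hall
    have hub : ∑ φ ∈ Inj, (m φ:ℝ) ≤ ((t+a:ℕ):ℝ) * (n:ℝ)^a := by
      have hic : Inj.card ≤ n^a :=
        (Finset.card_filter_le _ _).trans_eq
          (by rw [Finset.card_univ, Fintype.card_fun, Fintype.card_fin])
      calc ∑ φ ∈ Inj, (m φ:ℝ) ≤ ∑ _φ ∈ Inj, ((t+a:ℕ):ℝ) := by
            apply Finset.sum_le_sum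
            intro φ hφ
            have := hall φ hφ
            have h6 : m φ ≤ t + a := by omega
            exact_mod_cast h6
        _ = (Inj.card : ℝ) * ((t+a:ℕ):ℝ) := by rw [Finset.sum_const, nsmul_eq_mul]
        _ ≤ ((n:ℝ)^a) * ((t+a:ℕ):ℝ) := by
            apply mul_le_mul_of_nonneg_right _ (by positivity)
            calc (Inj.card : ℝ) ≤ ((n^a : ℕ) : ℝ) := by exact_mod_cast hic
              _ = (n:ℝ)^a := by push_cast; rfl
        _ = ((t+a:ℕ):ℝ) * (n:ℝ)^a := mul_comm _ _
    have hpow : (0:ℝ) < (n:ℝ)^a := by positivity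
    have h7 : ((t+a+1:ℕ):ℝ) * (n:ℝ)^a ≤ ((t+a:ℕ):ℝ) * (n:ℝ)^a := le_trans hInj hub
    have h8 := (mul_le_mul_iff_of_pos_right hpow).1 h7
    have h9 : ((t+a+1:ℕ):ℝ) = ((t+a:ℕ):ℝ) + 1 := by push_cast; ring
    linarith
  obtain ⟨φs, hφsInj, hφsgood⟩ := hexist
  have hφsinj : Function.Injective φs := (Finset.mem_filter.1 hφsInj).2
  have hBcard : t ≤ (good G H φs \ univ.image φs).card := by
    have h1 : (univ.image φs).card ≤ a := le_trans Finset.card_image_le (by rw [Finset.card_univ])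
    have h2 := Finset.le_card_sdiff (univ.image φs) (good G H φs)
    have h3 : t + a + 1 ≤ (good G H φs).card := hφsgood
    omega
  obtain ⟨T, hTB, hTcard⟩ := Finset.exists_subset_card_eq hBcard
  obtain ⟨u, huinj, huimg⟩ := exists_enum hTcard
  have huT : ∀ i : Fin t, u i ∈ T := by
    intro i
    rw [← huimg]
    exact Finset.mem_image_of_mem u (Finset.mem_univ i)
  apply hno
  refine ⟨Sum.elim φs u, ?_, ?_⟩
  · intro x y hxy
    cases x with
    | inl x =>
      cases y with
      | inl y => exact congrArg Sum.inl (hφsinj hxy)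
      | inr j =>
        exfalso
        have hout := (Finset.mem_sdiff.1 (hTB (huT j))).2
        exact hout (Finset.mem_image.2 ⟨x, Finset.mem_univ x, hxy⟩)
    | inr i =>
      cases y with
      | inl y =>
        exfalso
        have hout := (Finset.mem_sdiff.1 (hTB (huT i))).2
        exact hout (Finset.mem_image.2 ⟨y, Finset.mem_univ y, hxy.symm⟩)
      | inr j => exact congrArg Sum.inr (huinj hxy)
  · intro e he
    simp only [HGraph.cone, linkCone, Finset.mem_biUnion, Finset.mem_univ, true_and,
      Finset.mem_image] at he
    obtain ⟨i, f, hf, rfl⟩ := he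
    rw [Finset.image_insert, Finset.image_image]
    have h1 : u i ∈ good G H φs := (Finset.mem_sdiff.1 (hTB (huT i))).1
    rw [good, Finset.mem_filter] at h1
    exact h1.2 f hf

end Link
lemma exNum_le_of_forall {r' : ℕ} {γ' : Type} (n : ℕ) (G' : HGraph r' γ') {R : ℝ} (hR : 0 ≤ R)
    (h : ∀ H : HGraph r' (Fin n), ¬ H.ContainsCopy G' → (H.edges.card : ℝ) ≤ R) :
    (exNum n G' : ℝ) ≤ R := by
  classical
  have hnat : exNum n G' ≤ Nat.floor R := by
    unfold exNum
    rcases Set.eq_empty_or_nonempty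
      {m : ℕ | ∃ H : HGraph r' (Fin n), H.edges.card = m ∧ ¬ H.ContainsCopy G'} with he | hne
    · rw [he]
      rw [csSup_empty]
      exact Nat.zero_le _
    · apply csSup_le hne
      rintro x ⟨H, rfl, hno⟩
      exact Nat.le_floor (h H hno)
  calc (exNum n G' : ℝ) ≤ (Nat.floor R : ℝ) := by exact_mod_cast hnat
    _ ≤ R := Nat.floor_le hR

lemma exNum_le_pow {r' : ℕ} {γ' : Type} (n : ℕ) (G' : HGraph r' γ') :
    exNum n G' ≤ n ^ r' := by
  classical
  unfold exNum
  rcases Set.eq_empty_or_nonempty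
    {m : ℕ | ∃ H : HGraph r' (Fin n), H.edges.card = m ∧ ¬ H.ContainsCopy G'} with he | hne
  · rw [he, csSup_empty]
    exact Nat.zero_le _
  · apply csSup_le hne
    rintro x ⟨H, rfl, -⟩
    have hsub : H.edges ⊆ (univ : Finset (Fin n)).powersetCard r' := by
      intro e he
      rw [Finset.mem_powersetCard]
      exact ⟨Finset.subset_univ e, H.uniform e he⟩
    calc H.edges.card ≤ ((univ : Finset (Fin n)).powersetCard r').card := Finset.card_le_card hsub
      _ = (Fintype.card (Fin n)).choose r' := by
          rw [Finset.card_powersetCard, Finset.card_univ]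
      _ ≤ n ^ r' := by rw [Fintype.card_fin]; exact Nat.choose_le_pow n r'

section SExp
variable [Fintype α] [DecidableEq α]

/-- The set whose supremum defines the Sidorenko exponent. -/
def SSet (F : HGraph k α) : Set ℝ :=
  {s : ℝ | 0 ≤ s ∧ ∃ (n : ℕ) (H : HGraph k (Fin n)),
    homDensity F H = edgeDensity H ^ s ∧ 0 < edgeDensity H ^ s}

lemma sidorenkoExp_eq (F : HGraph k α) : sidorenkoExp F = sSup (SSet F) := rfl

lemma logb_mem_SSet {F : HGraph k α} {n : ℕ} {H : HGraph k (Fin n)}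
    (hd0 : 0 < edgeDensity H) (hd1 : edgeDensity H < 1) (ht0 : 0 < homDensity F H) :
    Real.logb (edgeDensity H) (homDensity F H) ∈ SSet F := by
  have hlogd : Real.log (edgeDensity H) < 0 := Real.log_neg hd0 hd1
  have hlogt : Real.log (homDensity F H) ≤ 0 :=
    Real.log_nonpos ht0.le (homDensity_le_one F H)
  refine ⟨?_, n, H, ?_, ?_⟩
  · rw [Real.logb, ← neg_div_neg_eq]
    exact div_nonneg (by linarith) (by linarith)
  · exact (Real.rpow_logb hd0 hd1.ne ht0).symm
  · rw [Real.rpow_logb hd0 hd1.ne ht0]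
    exact ht0

lemma upper_of_pos {F : HGraph k α} (hs : 0 < sidorenkoExp F) :
    ∀ x ∈ SSet F, x ≤ sidorenkoExp F := by
  intro x hx
  by_cases hb : BddAbove (SSet F)
  · exact le_csSup hb hx
  · exfalso
    rw [sidorenkoExp_eq, Real.sSup_of_not_bddAbove hb] at hs
    exact lt_irrefl _ hs

lemma edge_nonempty_of_pos (hk : 1 ≤ k) {F : HGraph k α} (hs : 0 < sidorenkoExp F) :
    F.edges.Nonempty := by
  by_contra h
  rw [Finset.not_nonempty_iff_eq_empty] at h
  have hSne : (SSet F).Nonempty := by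
    by_contra hne
    rw [Set.not_nonempty_iff_eq_empty] at hne
    rw [sidorenkoExp_eq, hne, Real.sSup_empty] at hs
    exact lt_irrefl _ hs
  obtain ⟨x, hx, hxpos⟩ : ∃ x ∈ SSet F, sidorenkoExp F / 2 < x :=
    exists_lt_of_lt_csSup hSne (by rw [← sidorenkoExp_eq]; linarith)
  have hx0 : 0 < x := lt_of_le_of_lt (by linarith) hxpos
  obtain ⟨hxnn, n, H, heq, hpos⟩ := hx
  rcases Nat.eq_zero_or_pos n with rfl | hn
  · rcases Nat.eq_zero_or_pos (Fintype.card α) with ha | ha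
    · have hd : edgeDensity H = 0 := by
        unfold edgeDensity homDensity
        have hc : homCount (KEdge k) H = 0 := by
          haveI : IsEmpty (Fin k → Fin 0) := ⟨fun f => (f ⟨0, hk⟩).elim0⟩
          rw [homCount, homFinset, Finset.univ_eq_empty, Finset.filter_empty, Finset.card_empty]
        rw [hc]
        simp
      rw [hd, Real.zero_rpow hx0.ne'] at hpos
      exact lt_irrefl _ hpos
    · have ht : homDensity F H = 0 := by
        unfold homDensity
        rw [Fintype.card_fin]
        norm_num [zero_pow ha.ne']
      rw [ht] at heq
      rw [← heq] at hpos
      exact lt_irrefl _ hpos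
  · have hNpos : (0:ℝ) < (n:ℝ)^(Fintype.card α) := by
      have : (0:ℝ) < (n:ℝ) := by exact_mod_cast hn
      positivity
    have ht1 : homDensity F H = 1 := by
      unfold homDensity
      have hhc : homCount F H = Fintype.card (Fin n) ^ Fintype.card α := by
        rw [homCount, homFinset]
        rw [Finset.filter_true_of_mem]
        · rw [Finset.card_univ, Fintype.card_fun]
        · intro φ _ e he
          rw [h] at he
          exact absurd he (Finset.notMem_empty e)
      rw [hhc]
      simp only [Fintype.card_fin]
      push_cast
      have : (0:ℝ) < (n:ℝ) := by exact_mod_cast hn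
      field_simp
    have hd1 : edgeDensity H ≤ 1 := edgeDensity_le_one H
    have hd0 : 0 ≤ edgeDensity H := edgeDensity_nonneg H
    have hdeq : edgeDensity H = 1 := by
      by_contra hne1
      have hlt : edgeDensity H < 1 := lt_of_le_of_ne hd1 hne1
      have hlt2 := Real.rpow_lt_one hd0 hlt hx0
      rw [← heq, ht1] at hlt2
      exact lt_irrefl _ hlt2
    have hall : ∀ y : ℝ, 0 ≤ y → y ∈ SSet F := by
      intro y hy
      exact ⟨hy, n, H, by rw [hdeq, Real.one_rpow, ht1], by rw [hdeq, Real.one_rpow]; norm_num⟩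
    have hcontr := upper_of_pos hs (sidorenkoExp F + 1) (hall (sidorenkoExp F + 1) (by linarith))
    linarith

end SExp

section SExp2
variable [Fintype α] [DecidableEq α]

lemma mem_SSet_of_graph {F : HGraph k α} {β : Type} [Fintype β] [DecidableEq β]
    (H : HGraph k β) (hd0 : 0 < edgeDensity H) (hd1 : edgeDensity H < 1)
    (ht0 : 0 < homDensity F H) :
    Real.logb (edgeDensity H) (homDensity F H) ∈ SSet F := by
  classical
  let e := Fintype.equivFin β
  have h1 : edgeDensity (relabel H e) = edgeDensity H := edgeDensity_relabel H e
  have h2 : homDensity F (relabel H e) = homDensity F H := homDensity_relabel F H e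
  have hmem := logb_mem_SSet (F := F) (H := relabel H e)
    (by rw [h1]; exact hd0) (by rw [h1]; exact hd1) (by rw [h2]; exact ht0)
  rwa [h1, h2] at hmem

lemma ge_rpow_of_pos {F : HGraph k α} (hs : 0 < sidorenkoExp F) {β : Type}
    [Fintype β] [DecidableEq β] (H : HGraph k β) (hd0 : 0 < edgeDensity H)
    (hd1 : edgeDensity H < 1) (ht0 : 0 < homDensity F H) :
    edgeDensity H ^ (sidorenkoExp F) ≤ homDensity F H := by
  have hx := mem_SSet_of_graph H hd0 hd1 ht0
  have hle := upper_of_pos hs _ hx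
  calc edgeDensity H ^ (sidorenkoExp F)
      ≤ edgeDensity H ^ (Real.logb (edgeDensity H) (homDensity F H)) :=
        Real.rpow_le_rpow_of_exponent_ge hd0 hd1.le hle
    _ = homDensity F H := Real.rpow_logb hd0 hd1.ne ht0

lemma one_le_of_pos (hk : 1 ≤ k) {F : HGraph k α} (hs : 0 < sidorenkoExp F) :
    1 ≤ sidorenkoExp F := by
  classical
  obtain ⟨f₀, hf₀⟩ := edge_nonempty_of_pos hk hs
  set A := Fintype.card α with hA
  have hkA : k ≤ A := by
    rw [← F.uniform f₀ hf₀]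
    exact Finset.card_le_univ f₀
  have hA1 : 1 ≤ A := le_trans hk hkA
  -- the graph: all k-subsets of Fin (A+1) avoiding the last vertex
  set H₀ : HGraph k (Fin (A+1)) :=
    ⟨((univ : Finset (Fin (A+1))).powersetCard k).filter (fun e => Fin.last A ∉ e), by
      intro e he
      rw [Finset.mem_filter, Finset.mem_powersetCard] at he
      exact he.1.2⟩ with hH₀
  have hmemedge : ∀ (S : Finset (Fin (A+1))), S.card = k → Fin.last A ∉ S → S ∈ H₀.edges := by
    intro S h1 h2
    rw [hH₀]
    rw [Finset.mem_filter, Finset.mem_powersetCard]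
    exact ⟨⟨Finset.subset_univ S, h1⟩, h2⟩
  have hlastnotin : ∀ (b : Fin A), Fin.castSucc b ≠ Fin.last A := by
    intro b
    exact ne_of_lt (Fin.castSucc_lt_last b)
  -- positivity of hom density
  have ht0 : 0 < homDensity F H₀ := by
    set φ0 : α → Fin (A+1) := fun x => Fin.castSucc (Fintype.equivFin α x) with hφ0
    have hinj : Function.Injective φ0 := by
      intro x y h
      exact (Fintype.equivFin α).injective (Fin.castSucc_injective _ h)
    have hmem : φ0 ∈ homFinset F H₀ := by
      rw [mem_homFinset]
      intro f hf
      apply hmemedge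
      · rw [Finset.card_image_of_injective _ hinj, F.uniform f hf]
      · intro hin
        obtain ⟨x, -, hx⟩ := Finset.mem_image.1 hin
        exact hlastnotin _ hx
    have hcpos : 0 < homCount F H₀ := Finset.card_pos.2 ⟨φ0, hmem⟩
    unfold homDensity
    apply div_pos
    · exact_mod_cast hcpos
    · rw [Fintype.card_fin]
      positivity
  -- positivity of edge density
  have hd0 : 0 < edgeDensity H₀ := by
    set ψ0 : Fin k → Fin (A+1) := fun i => Fin.castSucc (Fin.castLE hkA i) with hψ0
    have hinj : Function.Injective ψ0 := by
      intro x y h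
      exact (Fin.castLE_injective hkA) (Fin.castSucc_injective _ h)
    have hmem : ψ0 ∈ homFinset (KEdge k) H₀ := by
      rw [mem_homFinset_KEdge]
      apply hmemedge
      · rw [Finset.card_image_of_injective _ hinj, Finset.card_univ, Fintype.card_fin]
      · intro hin
        obtain ⟨x, -, hx⟩ := Finset.mem_image.1 hin
        exact hlastnotin _ hx
    have hcpos : 0 < homCount (KEdge k) H₀ := Finset.card_pos.2 ⟨ψ0, hmem⟩
    unfold edgeDensity homDensity
    apply div_pos
    · exact_mod_cast hcpos
    · rw [Fintype.card_fin, Fintype.card_fin]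
      positivity
  -- edge density < 1
  have hd1 : edgeDensity H₀ < 1 := by
    set ψc : Fin k → Fin (A+1) := fun _ => Fin.last A with hψc
    have hnot : ψc ∉ homFinset (KEdge k) H₀ := by
      rw [mem_homFinset_KEdge]
      intro hmem
      rw [hH₀, Finset.mem_filter] at hmem
      apply hmem.2
      exact Finset.mem_image.2 ⟨⟨0, hk⟩, Finset.mem_univ _, rfl⟩
    have hsub : homFinset (KEdge k) H₀ ⊆ (univ : Finset (Fin k → Fin (A+1))).erase ψc := by
      intro ψ hψ
      rw [Finset.mem_erase]
      exact ⟨fun h => hnot (h ▸ hψ), Finset.mem_univ _⟩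
    have hlt : homCount (KEdge k) H₀ < (A+1) ^ k := by
      calc homCount (KEdge k) H₀ ≤ ((univ : Finset (Fin k → Fin (A+1))).erase ψc).card :=
            Finset.card_le_card hsub
        _ = (A+1) ^ k - 1 := by
            rw [Finset.card_erase_of_mem (Finset.mem_univ _), Finset.card_univ,
              Fintype.card_fun, Fintype.card_fin, Fintype.card_fin]
        _ < (A+1) ^ k := by
            have : 1 ≤ (A+1)^k := Nat.one_le_pow _ _ (by omega)
            omega
    unfold edgeDensity homDensity
    rw [Fintype.card_fin, Fintype.card_fin]
    rw [div_lt_one (by positivity)]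
    exact_mod_cast hlt
  -- domination
  have hdom : homDensity F H₀ ≤ edgeDensity H₀ := homDensity_le_edgeDensity hk F H₀ hf₀
  have hlogd : Real.log (edgeDensity H₀) < 0 := Real.log_neg hd0 hd1
  have hx1 : 1 ≤ Real.logb (edgeDensity H₀) (homDensity F H₀) := by
    rw [Real.logb]
    rw [le_div_iff_of_neg hlogd]
    calc Real.log (homDensity F H₀) ≤ Real.log (edgeDensity H₀) :=
          Real.log_le_log ht0 hdom
      _ = 1 * Real.log (edgeDensity H₀) := (one_mul _).symm
  exact le_trans hx1 (upper_of_pos hs _ (logb_mem_SSet hd0 hd1 ht0))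

end SExp2

section Blowup
variable [Fintype α] [DecidableEq α]

lemma pos_homDensity_of_pos (hk : 1 ≤ k) {F : HGraph k α} (hs : 0 < sidorenkoExp F)
    {n : ℕ} (L : HGraph k (Fin n)) (hd0 : 0 < edgeDensity L) (hd1 : edgeDensity L < 1) :
    0 < homDensity F L := by
  classical
  obtain ⟨f₀, hf₀⟩ := edge_nonempty_of_pos hk hs
  set A := Fintype.card α with hA
  have hkA : k ≤ A := by
    rw [← F.uniform f₀ hf₀]
    exact Finset.card_le_univ f₀
  have hA1 : 1 ≤ A := le_trans hk hkA
  have hn : 0 < n := by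
    by_contra hn0
    push_neg at hn0
    interval_cases n
    have : edgeDensity L = 0 := by
      unfold edgeDensity homDensity
      rw [Fintype.card_fin]
      norm_num [zero_pow (by omega : k ≠ 0)]
    rw [this] at hd0
    exact lt_irrefl _ hd0
  have hNn : (0:ℝ) < (n:ℝ) := by exact_mod_cast hn
  by_contra hcon
  push_neg at hcon
  have ht0 : homDensity F L = 0 := le_antisymm hcon (homDensity_nonneg F L)
  have hhom0 : homFinset F L = ∅ := by
    unfold homDensity at ht0
    rw [Fintype.card_fin] at ht0
    rw [div_eq_zero_iff] at ht0
    rcases ht0 with h | h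
    · rw [homCount] at h
      exact Finset.card_eq_zero.1 (by exact_mod_cast h)
    · exfalso
      have : (0:ℝ) < (n:ℝ)^A := by positivity
      rw [h] at this
      exact lt_irrefl _ this
  have hcL1 : 1 ≤ homCount (KEdge k) L := by
    by_contra hc
    push_neg at hc
    interval_cases h : homCount (KEdge k) L
    unfold edgeDensity homDensity at hd0
    rw [h] at hd0
    norm_num at hd0
  have hcLhigh : homCount (KEdge k) L < n ^ k := by
    have := hd1
    unfold edgeDensity homDensity at this
    rw [Fintype.card_fin, Fintype.card_fin, div_lt_one (by positivity)] at this
    exact_mod_cast this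
  obtain ⟨ψ₀, hψ₀⟩ : ∃ ψ₀ : Fin k → Fin n, (univ : Finset (Fin k)).image ψ₀ ∉ L.edges := by
    by_contra hall
    push_neg at hall
    have : (univ : Finset (Fin k → Fin n)) ⊆ homFinset (KEdge k) L := by
      intro ψ _
      exact mem_homFinset_KEdge.2 (hall ψ)
    have hge := Finset.card_le_card this
    rw [Finset.card_univ, Fintype.card_fun, Fintype.card_fin, Fintype.card_fin] at hge
    rw [homCount] at hcLhigh
    omega
  set s := sidorenkoExp F with hsdef
  have hs1 : 1 ≤ s := one_le_of_pos hk hs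
  set δ : ℝ := edgeDensity L / 2^k with hδdef
  have hδ0 : 0 < δ := by
    rw [hδdef]; positivity
  have hδd : δ ≤ edgeDensity L / 1 := by
    rw [hδdef]
    apply div_le_div_of_nonneg_left hd0.le one_pos
    exact one_le_pow₀ (by norm_num)
  have hδ1 : δ < 1 := lt_of_le_of_lt (by rw [div_one] at hδd; exact hδd) hd1
  set W : ℝ := (A*A : ℝ) * δ ^ (-(s)) with hW
  have hW0 : 0 ≤ W := by
    rw [hW]
    have : (0:ℝ) ≤ δ ^ (-(s)) := Real.rpow_nonneg hδ0.le _
    positivity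
  set w := A + 1 + Nat.ceil W with hwdef
  have hwA : A ≤ w := by omega
  have hw1 : 1 ≤ w := by omega
  have hceil : Nat.ceil W < w := by omega
  have hNW : W < ((n*w + A : ℕ) : ℝ) := by
    have h1 : W ≤ (Nat.ceil W : ℝ) := Nat.le_ceil W
    have h2 : Nat.ceil W < n*w + A := by nlinarith [hn, hw1, hceil]
    calc W ≤ (Nat.ceil W : ℝ) := h1
      _ < ((n*w + A : ℕ) : ℝ) := by exact_mod_cast h2
  set lp : ((Fin n × Fin w) ⊕ Fin A) → Fin n := Sum.elim Prod.fst (fun _ => ⟨0, hn⟩) with hlp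
  set Hw : HGraph k ((Fin n × Fin w) ⊕ Fin A) :=
    ⟨((univ : Finset ((Fin n × Fin w) ⊕ Fin A)).powersetCard k).filter
      (fun S => (∀ x ∈ S, x.isRight = true) ∨ ((∀ x ∈ S, x.isLeft = true) ∧ S.image lp ∈ L.edges)), by
      intro e he
      rw [Finset.mem_filter, Finset.mem_powersetCard] at he
      exact he.1.2⟩ with hHw
  have hcardV : Fintype.card ((Fin n × Fin w) ⊕ Fin A) = n*w + A := by simp
  have hNV : (0:ℝ) < ((n*w + A : ℕ) : ℝ) := by
    have : 0 < n*w + A := by positivity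
    exact_mod_cast this
  -- (i) positive hom density
  have ht0w : 0 < homDensity F Hw := by
    set φw : α → ((Fin n × Fin w) ⊕ Fin A) := fun x => Sum.inr (Fintype.equivFin α x) with hφw
    have hinj : Function.Injective φw := by
      intro x y h
      rw [hφw] at h
      simp only [Sum.inr.injEq] at h
      exact (Fintype.equivFin α).injective h
    have hmem : φw ∈ homFinset F Hw := by
      rw [mem_homFinset]
      intro f hf
      rw [hHw, Finset.mem_filter, Finset.mem_powersetCard]
      refine ⟨⟨Finset.subset_univ _, by rw [Finset.card_image_of_injective _ hinj, F.uniform f hf]⟩, ?_⟩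
      left
      intro x hx
      obtain ⟨y, -, hy⟩ := Finset.mem_image.1 hx
      rw [← hy]
      rfl
    have hcpos : 0 < homCount F Hw := Finset.card_pos.2 ⟨φw, hmem⟩
    unfold homDensity
    apply div_pos
    · exact_mod_cast hcpos
    · rw [hcardV]
      positivity
  -- (ii) lower bound on K-edge homs
  have hKlow : homCount (KEdge k) L * w ^ k ≤ homCount (KEdge k) Hw := by
    calc homCount (KEdge k) L * w ^ k
        = (homFinset (KEdge k) L ×ˢ (univ : Finset (Fin k → Fin w))).card := by
          rw [Finset.card_product, Finset.card_univ, Fintype.card_fun, Fintype.card_fin,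
            Fintype.card_fin, homCount]
      _ ≤ homCount (KEdge k) Hw := by
          apply Finset.card_le_card_of_injOn
            (fun p => fun i => Sum.inl (p.1 i, p.2 i))
          · rintro ⟨χ, h⟩ hp
            rw [Finset.mem_coe, Finset.mem_product] at hp
            have hχ := mem_homFinset_KEdge.1 hp.1
            have hχinj : Function.Injective χ := by
              have hcard : ((univ : Finset (Fin k)).image χ).card = (univ : Finset (Fin k)).card := by
                rw [L.uniform _ hχ, Finset.card_univ, Fintype.card_fin]
              have hinjOn := Finset.card_image_iff.1 hcard
              intro x y hxy
              exact hinjOn (by simp) (by simp) hxy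
            have hψinj : Function.Injective (fun i => (Sum.inl (χ i, h i) : (Fin n × Fin w) ⊕ Fin A)) := by
              intro x y hxy
              simp only [Sum.inl.injEq, Prod.mk.injEq] at hxy
              exact hχinj hxy.1
            rw [Finset.mem_coe, mem_homFinset_KEdge, hHw, Finset.mem_filter, Finset.mem_powersetCard]
            refine ⟨⟨Finset.subset_univ _, by
              rw [Finset.card_image_of_injective _ hψinj, Finset.card_univ, Fintype.card_fin]⟩, ?_⟩
            right
            constructor
            · intro x hx
              obtain ⟨y, -, hy⟩ := Finset.mem_image.1 hx
              rw [← hy]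
              rfl
            · rw [Finset.image_image]
              have : (lp ∘ fun i => (Sum.inl (χ i, h i) : (Fin n × Fin w) ⊕ Fin A)) = χ := by
                funext i
                rfl
              rw [this]
              exact hχ
          · rintro ⟨χ, h⟩ hp ⟨χ', h'⟩ hp' heq
            have : ∀ i, (Sum.inl (χ i, h i) : (Fin n × Fin w) ⊕ Fin A) = Sum.inl (χ' i, h' i) :=
              fun i => congrFun heq i
            have hc : χ = χ' := by
              funext i
              have := this i
              simp only [Sum.inl.injEq, Prod.mk.injEq] at this
              exact this.1
            have hh : h = h' := by
              funext i
              have := this i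
              simp only [Sum.inl.injEq, Prod.mk.injEq] at this
              exact this.2
            rw [Prod.ext_iff]
            exact ⟨hc, hh⟩
  -- (iii) strict upper bound on K-edge homs
  have hKhigh : homCount (KEdge k) Hw < (n*w + A) ^ k := by
    set ψ' : Fin k → ((Fin n × Fin w) ⊕ Fin A) := fun i => Sum.inl (ψ₀ i, ⟨0, hw1⟩) with hψ'
    have hnot : ψ' ∉ homFinset (KEdge k) Hw := by
      rw [mem_homFinset_KEdge, hHw, Finset.mem_filter]
      rintro ⟨-, hor | hand⟩
      · have hmem : (ψ' ⟨0, hk⟩) ∈ (univ : Finset (Fin k)).image ψ' :=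
          Finset.mem_image.2 ⟨⟨0, hk⟩, Finset.mem_univ _, rfl⟩
        have := hor _ hmem
        rw [hψ'] at this
        simp at this
      · have himg : ((univ : Finset (Fin k)).image ψ').image lp = (univ : Finset (Fin k)).image ψ₀ := by
          rw [Finset.image_image]
          congr 1
        rw [himg] at hand
        exact hψ₀ hand.2
    have hsub : homFinset (KEdge k) Hw ⊆ (univ : Finset (Fin k → (Fin n × Fin w) ⊕ Fin A)).erase ψ' := by
      intro ψ hψ
      rw [Finset.mem_erase]
      exact ⟨fun h => hnot (h ▸ hψ), Finset.mem_univ _⟩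
    calc homCount (KEdge k) Hw ≤ ((univ : Finset (Fin k → (Fin n × Fin w) ⊕ Fin A)).erase ψ').card :=
          Finset.card_le_card hsub
      _ = (n*w+A) ^ k - 1 := by
          rw [Finset.card_erase_of_mem (Finset.mem_univ _), Finset.card_univ, Fintype.card_fun,
            Fintype.card_fin, hcardV]
      _ < (n*w+A) ^ k := by
          have : 1 ≤ (n*w+A)^k := Nat.one_le_pow _ _ (by positivity)
          omega
  -- (iv) upper bound on hom density
  have hthigh : homDensity F Hw ≤ (A*A : ℝ) / ((n*w + A : ℕ) : ℝ) := by
    set RS : Finset ((Fin n × Fin w) ⊕ Fin A) := (univ : Finset (Fin A)).image Sum.inr with hRS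
    have hRScard : RS.card = A := by
      rw [hRS, Finset.card_image_of_injective _ Sum.inr_injective, Finset.card_univ,
        Fintype.card_fin]
    have hsub : homFinset F Hw ⊆ (univ : Finset α).biUnion
        (fun u => univ.filter (fun φ : α → (Fin n × Fin w) ⊕ Fin A => φ u ∈ RS)) := by
      intro φ hφ
      rw [Finset.mem_biUnion]
      by_contra hnone
      push_neg at hnone
      have hallleft : ∀ u : α, (φ u).isLeft = true := by
        intro u
        have h1 := hnone u (Finset.mem_univ u)
        rw [Finset.mem_filter] at h1
        push_neg at h1
        have h2 := h1 (Finset.mem_univ _)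
        cases hcase : φ u with
        | inl a => rfl
        | inr b =>
          exfalso
          apply h2
          rw [hcase, hRS]
          exact Finset.mem_image.2 ⟨b, Finset.mem_univ _, rfl⟩
      have hχ : (lp ∘ φ) ∈ homFinset F L := by
        rw [mem_homFinset]
        intro f hf
        have hedge := mem_homFinset.1 hφ f hf
        rw [hHw, Finset.mem_filter] at hedge
        rcases hedge.2 with hor | hand
        · exfalso
          have hfne : f.Nonempty := by
            rw [← Finset.card_pos, F.uniform f hf]
            omega
          obtain ⟨y, hy⟩ := hfne
          have hmem : φ y ∈ f.image φ := Finset.mem_image_of_mem φ hy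
          have h2 := hor _ hmem
          have h3 := hallleft y
          cases hcase : φ y with
          | inl a => rw [hcase] at h2; simp at h2
          | inr b => rw [hcase] at h3; simp at h3
        · have himg : (f.image φ).image lp = f.image (lp ∘ φ) := Finset.image_image
          rw [himg] at hand
          exact hand.2
      rw [hhom0] at hχ
      exact Finset.notMem_empty _ hχ
    have hcount : homCount F Hw ≤ A * (A * (n*w+A) ^ (A - 1)) := by
      calc homCount F Hw ≤ ((univ : Finset α).biUnion
          (fun u => univ.filter (fun φ : α → (Fin n × Fin w) ⊕ Fin A => φ u ∈ RS))).card :=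
            Finset.card_le_card hsub
        _ ≤ ∑ u : α, (univ.filter (fun φ : α → (Fin n × Fin w) ⊕ Fin A => φ u ∈ RS)).card :=
            Finset.card_biUnion_le
        _ ≤ ∑ _u : α, A * (n*w+A) ^ (A - 1) := by
            apply Finset.sum_le_sum
            intro u _
            have := card_filter_apply_mem (β := (Fin n × Fin w) ⊕ Fin A) u RS
            rwa [hRScard, hcardV, ← hA] at this
        _ = A * (A * (n*w+A) ^ (A - 1)) := by
            rw [Finset.sum_const, Finset.card_univ, ← hA, smul_eq_mul]
    unfold homDensity
    rw [hcardV, ← hA]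
    rw [div_le_div_iff₀ (by positivity) hNV]
    have hpow : ((n*w+A:ℕ):ℝ) ^ A = ((n*w+A:ℕ):ℝ) ^ (A-1) * ((n*w+A:ℕ):ℝ) := by
      rw [← pow_succ, Nat.sub_add_cancel hA1]
    calc (homCount F Hw : ℝ) * ((n*w+A:ℕ):ℝ)
        ≤ ((A * (A * (n*w+A) ^ (A - 1)) : ℕ) : ℝ) * ((n*w+A:ℕ):ℝ) := by
          apply mul_le_mul_of_nonneg_right _ hNV.le
          exact_mod_cast hcount
      _ = (A*A : ℝ) * (((n*w+A:ℕ):ℝ) ^ (A-1) * ((n*w+A:ℕ):ℝ)) := by push_cast; ring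
      _ = (A*A : ℝ) * ((n*w+A:ℕ):ℝ) ^ A := by rw [← hpow]
  -- (v) edge density bounds
  have hdw1 : edgeDensity Hw < 1 := by
    unfold edgeDensity homDensity
    rw [Fintype.card_fin, hcardV, div_lt_one (by positivity)]
    calc (homCount (KEdge k) Hw : ℝ) < (((n*w+A)^k : ℕ) : ℝ) := by exact_mod_cast hKhigh
      _ = ((n*w+A:ℕ):ℝ)^k := by push_cast; ring
  have hdw0 : 0 < edgeDensity Hw := by
    unfold edgeDensity homDensity
    rw [Fintype.card_fin, hcardV]
    apply div_pos
    · have h1 : 1 ≤ homCount (KEdge k) Hw := by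
        have h2 : 1 * 1 ≤ homCount (KEdge k) L * w^k :=
          Nat.mul_le_mul hcL1 (Nat.one_le_pow _ _ hw1)
        omega
      exact_mod_cast h1
    · positivity
  have hdwlow : δ ≤ edgeDensity Hw := by
    have hN2 : ((n*w+A:ℕ):ℝ) ≤ 2*((n:ℝ)*(w:ℝ)) := by
      have h1 : A ≤ n*w := le_trans hwA (Nat.le_mul_of_pos_left w hn)
      have h2 : n*w + A ≤ 2*(n*w) := by omega
      calc ((n*w+A:ℕ):ℝ) ≤ ((2*(n*w) : ℕ):ℝ) := by exact_mod_cast h2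
        _ = 2*((n:ℝ)*(w:ℝ)) := by push_cast; ring
    have hw0 : (0:ℝ) < (w:ℝ) := by exact_mod_cast hw1
    have hNpow : ((n*w+A:ℕ):ℝ)^k ≤ 2^k * ((n:ℝ)^k * (w:ℝ)^k) := by
      calc ((n*w+A:ℕ):ℝ)^k ≤ (2*((n:ℝ)*(w:ℝ)))^k := pow_le_pow_left₀ hNV.le hN2 k
        _ = 2^k * ((n:ℝ)^k * (w:ℝ)^k) := by rw [mul_pow, mul_pow]
    have hLd : edgeDensity L = (homCount (KEdge k) L : ℝ) / (n:ℝ)^k := by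
      unfold edgeDensity homDensity
      rw [Fintype.card_fin, Fintype.card_fin]
    have hstep : δ * ((n*w+A:ℕ):ℝ)^k ≤ (homCount (KEdge k) L : ℝ) * (w:ℝ)^k := by
      rw [hδdef, hLd]
      calc (homCount (KEdge k) L : ℝ) / (n:ℝ)^k / 2^k * ((n*w+A:ℕ):ℝ)^k
          ≤ (homCount (KEdge k) L : ℝ) / (n:ℝ)^k / 2^k * (2^k * ((n:ℝ)^k * (w:ℝ)^k)) := by
            apply mul_le_mul_of_nonneg_left hNpow (by positivity)
        _ = (homCount (KEdge k) L : ℝ) * (w:ℝ)^k := by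
            field_simp
    have hfin : (homCount (KEdge k) L : ℝ) * (w:ℝ)^k ≤ (homCount (KEdge k) Hw : ℝ) := by
      calc (homCount (KEdge k) L : ℝ) * (w:ℝ)^k = ((homCount (KEdge k) L * w^k : ℕ) : ℝ) := by
            push_cast; ring
        _ ≤ (homCount (KEdge k) Hw : ℝ) := by exact_mod_cast hKlow
    unfold edgeDensity homDensity
    rw [Fintype.card_fin, hcardV, le_div_iff₀ (by positivity)]
    exact le_trans hstep hfin
  -- contradiction
  have hSid := ge_rpow_of_pos hs Hw hdw0 hdw1 ht0w
  have hmono : δ^s ≤ edgeDensity Hw ^ s := Real.rpow_le_rpow hδ0.le hdwlow (by linarith)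
  have hfinal : δ^s ≤ (A*A : ℝ) / ((n*w + A : ℕ) : ℝ) := le_trans (le_trans hmono hSid) hthigh
  have hδs : 0 < δ^s := Real.rpow_pos_of_pos hδ0 s
  have hup : δ^s * ((n*w + A : ℕ) : ℝ) ≤ (A*A:ℝ) := (le_div_iff₀ hNV).1 hfinal
  have hlow2 : (A*A:ℝ) < δ^s * ((n*w + A : ℕ) : ℝ) := by
    have h1 : W < ((n*w + A : ℕ) : ℝ) := hNW
    rw [hW] at h1
    have h2 : δ ^ (-(s)) = (δ^s)⁻¹ := Real.rpow_neg hδ0.le s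
    rw [h2] at h1
    calc (A*A:ℝ) = (A*A:ℝ) * (δ^s)⁻¹ * δ^s := by field_simp
      _ < ((n*w + A : ℕ) : ℝ) * δ^s := by
          apply mul_lt_mul_of_pos_right h1 hδs
      _ = δ^s * ((n*w + A : ℕ) : ℝ) := mul_comm _ _
  linarith

lemma sid_of_pos (hk : 1 ≤ k) {F : HGraph k α} (hs : 0 < sidorenkoExp F) :
    Sid F (sidorenkoExp F) := by
  classical
  intro n L
  have hd0 : 0 ≤ edgeDensity L := edgeDensity_nonneg L
  have hd1 : edgeDensity L ≤ 1 := edgeDensity_le_one L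
  rcases eq_or_lt_of_le hd0 with hzero | hpos
  · rw [← hzero, Real.zero_rpow (by linarith)]
    exact homDensity_nonneg F L
  rcases eq_or_lt_of_le hd1 with hone | hlt1
  · -- edge density = 1 : complete, hom density is 1
    have hn : 0 < n := by
      by_contra hn0
      push_neg at hn0
      interval_cases n
      have : edgeDensity L = 0 := by
        unfold edgeDensity homDensity
        rw [Fintype.card_fin]
        norm_num [zero_pow (by omega : k ≠ 0)]
      rw [this] at hpos
      exact lt_irrefl _ hpos
    have hNn : (0:ℝ) < (n:ℝ) := by exact_mod_cast hn
    have hcnat : homCount (KEdge k) L = n^k := by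
      have h1 : (homCount (KEdge k) L : ℝ) = (n:ℝ)^k := by
        have h2 := hone.symm
        unfold edgeDensity homDensity at h2
        rw [Fintype.card_fin, Fintype.card_fin] at h2
        field_simp at h2
        linarith [h2]
      exact_mod_cast h1
    have hcomplete : homFinset (KEdge k) L = (univ : Finset (Fin k → Fin n)) := by
      apply Finset.eq_univ_of_card
      have hrfl : (homFinset (KEdge k) L).card = homCount (KEdge k) L := rfl
      rw [hrfl, hcnat, Fintype.card_fun, Fintype.card_fin, Fintype.card_fin]
    have hallhom : ∀ ψ : Fin k → Fin n, (univ : Finset (Fin k)).image ψ ∈ L.edges := by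
      intro ψ
      exact mem_homFinset_KEdge.1 (hcomplete ▸ Finset.mem_univ ψ)
    have hallφ : ∀ φ : α → Fin n, φ ∈ homFinset F L := by
      intro φ
      rw [mem_homFinset]
      intro f hf
      obtain ⟨u, huinj, huimg⟩ := exists_enum (F.uniform f hf)
      have : f.image φ = (univ : Finset (Fin k)).image (φ ∘ u) := by
        rw [← huimg, Finset.image_image]
      rw [this]
      exact hallhom (φ ∘ u)
    have hhomall : homFinset F L = (univ : Finset (α → Fin n)) :=
      Finset.eq_univ_iff_forall.2 hallφ
    have ht1 : homDensity F L = 1 := by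
      unfold homDensity
      rw [homCount, hhomall, Finset.card_univ, Fintype.card_fun, Fintype.card_fin]
      push_cast
      field_simp
    rw [hone, Real.one_rpow, ht1]
  · have ht0 : 0 < homDensity F L := pos_homDensity_of_pos hk hs L hpos hlt1
    exact ge_rpow_of_pos hs L hpos hlt1 ht0

end Blowup

/-- Bundled Sidorenko property. -/
def SidB (b : BHG) (σ : ℝ) : Prop := @Sid b.r b.V b.fin b.deq b.G σ

lemma sidB_cone {b : BHG} {σ : ℝ} (h : SidB b σ) (hσ : 1 ≤ σ) {t : ℕ} (ht : 1 ≤ t) :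
    SidB (b.cone t) (σ * t) := by
  letI := b.fin
  letI := b.deq
  exact sid_cone h hσ ht

lemma coneIter_r (b : BHG) (l : List ℕ) : (b.coneIter l).r = b.r + l.length := by
  induction l generalizing b with
  | nil => rfl
  | cons t l ih =>
    show ((b.cone t).coneIter l).r = _
    rw [ih (b.cone t)]
    show b.r + 1 + l.length = b.r + (l.length + 1)
    omega

lemma coneIter_card_pos (b : BHG) (hb : 0 < @Fintype.card b.V b.fin) (l : List ℕ) :
    0 < @Fintype.card (b.coneIter l).V (b.coneIter l).fin := by
  induction l generalizing b with
  | nil => exact hb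
  | cons t l ih =>
    apply ih (b.cone t)
    letI := b.fin
    have h : (b.cone t).fin = (inferInstance : Fintype (b.V ⊕ Fin t)) := rfl
    show 0 < @Fintype.card (b.V ⊕ Fin t) (b.cone t).fin
    rw [h]
    rw [Fintype.card_sum]
    omega

lemma sidB_coneIter {b : BHG} {σ : ℝ} (h : SidB b σ) (hσ : 1 ≤ σ) (l : List ℕ)
    (hl : ∀ t ∈ l, 1 ≤ t) : SidB (b.coneIter l) (σ * (l.prod : ℝ)) := by
  induction l generalizing b σ with
  | nil => simpa [BHG.coneIter] using h
  | cons t l ih =>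
    have ht : 1 ≤ t := hl t (by simp)
    have h1 : SidB (b.cone t) (σ * t) := sidB_cone h hσ ht
    have hσt : 1 ≤ σ * (t:ℝ) := by
      calc (1:ℝ) = 1 * 1 := by norm_num
      _ ≤ σ * (t:ℝ) := by
          apply mul_le_mul hσ _ (by norm_num) (by linarith)
          exact_mod_cast ht
    have h2 := ih h1 hσt (fun x hx => hl x (by simp [hx]))
    have hpr : σ * (((t :: l).prod : ℕ) : ℝ) = (σ * t) * ((l.prod : ℕ) : ℝ) := by
      rw [List.prod_cons]
      push_cast
      ring
    show SidB ((b.cone t).coneIter l) (σ * (((t :: l).prod : ℕ) : ℝ))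
    rw [hpr]
    exact h2

lemma exB (b : BHG) {σ : ℝ} (hσ : 1 ≤ σ) (hSid : SidB b σ) {t : ℕ} (ht : 1 ≤ t)
    (hV : 0 < @Fintype.card b.V b.fin) :
    ∃ C : ℝ, 0 < C ∧ ∀ n : ℕ,
      ((b.cone t).exNum n : ℝ) ≤ C * (n:ℝ) ^ ((b.r + 1 : ℝ) - 1/σ) := by
  letI := b.fin
  letI := b.deq
  set a := Fintype.card b.V with hadef
  refine ⟨((a*a + t + a + 1 : ℕ) : ℝ), by exact_mod_cast Nat.pos_of_ne_zero (by omega), fun n => ?_⟩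
  have hrw : (b.cone t).exNum n = _root_.exNum n (b.G.cone t) := rfl
  rw [hrw]
  apply exNum_le_of_forall
  · have h1 : (0:ℝ) ≤ ((a*a + t + a + 1 : ℕ) : ℝ) := by positivity
    have h2 : (0:ℝ) ≤ (n:ℝ) ^ ((b.r + 1 : ℝ) - 1/σ) := Real.rpow_nonneg (by positivity) _
    positivity
  · intro H hno
    exact embed_bound hSid hσ ht hV n H hno

lemma exB_triv (b : BHG) (n : ℕ) : (b.exNum n : ℝ) ≤ (n:ℝ) ^ (b.r : ℕ) := by
  letI := b.fin
  letI := b.deq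
  have h : b.exNum n = _root_.exNum n b.G := rfl
  rw [h]
  have h2 := exNum_le_pow (r' := b.r) n b.G
  calc ((_root_.exNum n b.G : ℕ) : ℝ) ≤ ((n ^ b.r : ℕ) : ℝ) := by exact_mod_cast h2
    _ = (n:ℝ) ^ (b.r : ℕ) := by push_cast; ring

end Stmt9Aux

/-- `ex(n, F(t₁,…,t_ℓ)) = O_{F,t₁,…,t_ℓ}(n^{r − 1/(s(F)·t₁⋯t_{ℓ−1})})` for an
`(r−ℓ)`-graph `F` and positive integers `t₁,…,t_ℓ` (here `ts = [t₁,…,t_ℓ]`,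
`ℓ = ts.length ≥ 1`, and `r = k + ℓ` with `k ≥ 1`). -/
theorem stmt9 {k : ℕ} (hk : 1 ≤ k) {α : Type} [Fintype α] [DecidableEq α]
    (F : HGraph k α) (ts : List ℕ) (hne : ts ≠ []) (hpos : ∀ t ∈ ts, 0 < t) :
    ∃ C : ℝ, 0 < C ∧ ∀ n : ℕ,
      (((BHG.mk k α inferInstance inferInstance F).coneIter ts).exNum n : ℝ) ≤
        C * (n : ℝ) ^ ((k + ts.length : ℝ) -
          1 / (sidorenkoExp F * (ts.dropLast.prod : ℝ))) := by
  classical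
  open Stmt9Aux in
  set base : BHG := BHG.mk k α inferInstance inferInstance F with hbase
  have hs0 : 0 ≤ sidorenkoExp F := by
    rw [Stmt9Aux.sidorenkoExp_eq]
    apply Real.sSup_nonneg
    rintro x ⟨hx0, -⟩
    exact hx0
  have hts : ts.dropLast ++ [ts.getLast hne] = ts := List.dropLast_append_getLast hne
  have hfold : base.coneIter ts = (base.coneIter ts.dropLast).cone (ts.getLast hne) := by
    conv_lhs => rw [← hts]
    simp [BHG.coneIter, List.foldl_append]
  have hlen : ts.dropLast.length + 1 = ts.length := by
    conv_rhs => rw [← hts]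
    rw [List.length_append]
    simp
  rcases eq_or_lt_of_le hs0 with hzero | hspos
  · -- degenerate case : exponent is r
    refine ⟨1, one_pos, fun n => ?_⟩
    have hexp : (k + ts.length : ℝ) - 1 / (sidorenkoExp F * (ts.dropLast.prod : ℝ))
        = (k + ts.length : ℝ) := by
      rw [← hzero]
      norm_num
    rw [hexp, one_mul]
    have hr : (base.coneIter ts).r = k + ts.length := Stmt9Aux.coneIter_r base ts
    have h1 := Stmt9Aux.exB_triv (base.coneIter ts) n
    rw [hr] at h1
    calc ((base.coneIter ts).exNum n : ℝ) ≤ (n:ℝ) ^ (k + ts.length : ℕ) := h1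
      _ = (n:ℝ) ^ ((k + ts.length : ℝ)) := by
          rw [← Real.rpow_natCast (n:ℝ) (k + ts.length)]
          congr 1
          push_cast
          ring
  · -- main case
    have hs1 : 1 ≤ sidorenkoExp F := Stmt9Aux.one_le_of_pos hk hspos
    have hSidF : Stmt9Aux.Sid F (sidorenkoExp F) := Stmt9Aux.sid_of_pos hk hspos
    have hSidB : Stmt9Aux.SidB base (sidorenkoExp F) := hSidF
    have hlpos : ∀ x ∈ ts.dropLast, 1 ≤ x := fun x hx => hpos x (List.dropLast_subset ts hx)
    have hIter := Stmt9Aux.sidB_coneIter hSidB hs1 ts.dropLast hlpos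
    have hprod1 : 1 ≤ ts.dropLast.prod := by
      have := List.prod_pos (fun a ha => hpos a (List.dropLast_subset ts ha))
      omega
    have hσ1 : 1 ≤ sidorenkoExp F * (ts.dropLast.prod : ℝ) := by
      calc (1:ℝ) = 1 * 1 := by norm_num
        _ ≤ sidorenkoExp F * (ts.dropLast.prod : ℝ) := by
            apply mul_le_mul hs1 _ (by norm_num) (by linarith)
            exact_mod_cast hprod1
    have hαpos : 0 < Fintype.card α := by
      obtain ⟨f₀, hf₀⟩ := Stmt9Aux.edge_nonempty_of_pos hk hspos
      have h1 : k ≤ Fintype.card α := by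
        rw [← F.uniform f₀ hf₀]
        exact Finset.card_le_univ f₀
      omega
    have hV : 0 < @Fintype.card (base.coneIter ts.dropLast).V (base.coneIter ts.dropLast).fin :=
      Stmt9Aux.coneIter_card_pos base hαpos ts.dropLast
    have htl1 : 1 ≤ ts.getLast hne := hpos _ (List.getLast_mem hne)
    obtain ⟨C, hC0, hCb⟩ := Stmt9Aux.exB (base.coneIter ts.dropLast) hσ1 hIter htl1 hV
    refine ⟨C, hC0, fun n => ?_⟩
    have h1 := hCb n
    rw [← hfold] at h1
    have hr : (base.coneIter ts.dropLast).r = k + ts.dropLast.length :=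
      Stmt9Aux.coneIter_r base ts.dropLast
    have hexp : ((base.coneIter ts.dropLast).r + 1 : ℝ) = (k + ts.length : ℝ) := by
      rw [hr]
      rw [← hlen]
      push_cast
      ring
    rw [hexp] at h1
    exact h1
end

section
/- Let F be a Sidorenko (r−1)-graph and t a positive integer. Then ex(n, F(t)) ≤ O_{F,t}(n^{r − 1/e(F)}). -/
open Finset

variable {r : ℕ} {α β γ : Type}

section Aux

variable {k n : ℕ}

/-- Link of a vertex. -/
def link (H : HGraph (k+1) (Fin n)) (v : Fin n) : HGraph k (Fin n) where
  edges := (H.edges.filter fun e => v ∈ e).image fun e => e.erase v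
  uniform := by
    intro f hf
    simp only [Finset.mem_image, Finset.mem_filter] at hf
    obtain ⟨e, ⟨he, hv⟩, rfl⟩ := hf
    rw [Finset.card_erase_of_mem hv, H.uniform e he]
    omega

lemma link_card (H : HGraph (k+1) (Fin n)) (v : Fin n) :
    (link H v).edges.card = (H.edges.filter fun e => v ∈ e).card := by
  apply Finset.card_image_of_injOn
  intro e he e' he' h
  simp only [Finset.coe_filter, Set.mem_setOf_eq] at he he'
  simp only at h
  rw [← Finset.insert_erase he.2, h, Finset.insert_erase he'.2]

lemma link_mem {H : HGraph (k+1) (Fin n)} {v : Fin n} {f : Finset (Fin n)}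
    (hf : f ∈ (link H v).edges) : v ∉ f ∧ insert v f ∈ H.edges := by
  simp only [link, Finset.mem_image, Finset.mem_filter] at hf
  obtain ⟨e, ⟨he, hv⟩, rfl⟩ := hf
  exact ⟨Finset.notMem_erase _ _, by rwa [Finset.insert_erase hv]⟩

lemma mem_homFinset {α β : Type} [Fintype α] [DecidableEq α] [Fintype β] [DecidableEq β]
    {F : HGraph k α} {H : HGraph k β} {φ : α → β} :
    φ ∈ homFinset F H ↔ ∀ e ∈ F.edges, e.image φ ∈ H.edges := by
  simp [homFinset]

lemma le_homCount_KEdge (H' : HGraph k (Fin n)) :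
    H'.edges.card ≤ homCount (KEdge k) H' := by
  apply Finset.card_le_card_of_surjOn (fun φ : Fin k → Fin n => Finset.univ.image φ)
  intro f hf
  simp only [Finset.mem_coe] at hf
  have hcard : f.card = k := H'.uniform f hf
  have himage : Finset.univ.image ⇑(f.orderEmbOfFin hcard) = f := by
    ext y
    simp only [Finset.mem_image, Finset.mem_univ, true_and]
    rw [show (∃ i, f.orderEmbOfFin hcard i = y) ↔ y ∈ Set.range ⇑(f.orderEmbOfFin hcard) from Iff.rfl,
      Finset.range_orderEmbOfFin]
    exact Finset.mem_coe
  refine ⟨⇑(f.orderEmbOfFin hcard), ?_, himage⟩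
  simp only [Finset.mem_coe, mem_homFinset, KEdge, Finset.mem_singleton]
  rintro e rfl
  rwa [himage]

end Aux
section Aux2

variable {k n : ℕ}

lemma card_noninj {α : Type} [Fintype α] [DecidableEq α] (n : ℕ) :
    (Finset.univ.filter fun φ : α → Fin n => ¬ Function.Injective φ).card ≤
      (Fintype.card α)^2 * n ^ (Fintype.card α - 1) := by
  classical
  have hone : ∀ a b : α, a ≠ b →
      (Finset.univ.filter fun φ : α → Fin n => φ a = φ b).card ≤ n ^ (Fintype.card α - 1) := by
    intro a b hne
    have hsub : Fintype.card {x : α // x ≠ b} = Fintype.card α - 1 := by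
      have h1 : Fintype.card {x : α // ¬ (x = b)} = Fintype.card α - Fintype.card {x : α // x = b} :=
        Fintype.card_subtype_compl _
      rw [Fintype.card_subtype_eq] at h1
      exact h1
    have hinj2 : (Finset.univ.filter fun φ : α → Fin n => φ a = φ b).card
        ≤ (Finset.univ : Finset ({x : α // x ≠ b} → Fin n)).card := by
      apply Finset.card_le_card_of_injOn
        (fun (φ : α → Fin n) (x : {x : α // x ≠ b}) => φ x.1)
        (fun φ _ => Finset.mem_univ _)
      intro φ₁ h1 φ₂ h2 h
      simp only [Finset.coe_filter, Set.mem_setOf_eq] at h1 h2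
      funext x
      by_cases hx : x = b
      · subst hx
        have ha : φ₁ a = φ₂ a := congrFun h ⟨a, hne⟩
        rw [← h1.2, ha, h2.2]
      · exact congrFun h ⟨x, hx⟩
    calc (Finset.univ.filter fun φ : α → Fin n => φ a = φ b).card
          ≤ (Finset.univ : Finset ({x : α // x ≠ b} → Fin n)).card := hinj2
        _ = n ^ (Fintype.card α - 1) := by
            rw [Finset.card_univ, Fintype.card_fun, Fintype.card_fin, hsub]
  have hsub : (Finset.univ.filter fun φ : α → Fin n => ¬ Function.Injective φ) ⊆
      (Finset.univ : Finset α).offDiag.biUnion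
        (fun p => Finset.univ.filter fun φ : α → Fin n => φ p.1 = φ p.2) := by
    intro φ hφ
    simp only [Finset.mem_filter, Finset.mem_univ, true_and] at hφ
    rw [Function.not_injective_iff] at hφ
    obtain ⟨a, b, hab, hne⟩ := hφ
    simp only [Finset.mem_biUnion, Finset.mem_filter, Finset.mem_univ, true_and]
    exact ⟨(a, b), Finset.mem_offDiag.mpr ⟨Finset.mem_univ _, Finset.mem_univ _, hne⟩, hab⟩
  calc (Finset.univ.filter fun φ : α → Fin n => ¬ Function.Injective φ).card
      ≤ ((Finset.univ : Finset α).offDiag.biUnion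
          (fun p => Finset.univ.filter fun φ : α → Fin n => φ p.1 = φ p.2)).card :=
        Finset.card_le_card hsub
    _ ≤ ∑ p ∈ (Finset.univ : Finset α).offDiag,
          (Finset.univ.filter fun φ : α → Fin n => φ p.1 = φ p.2).card :=
        Finset.card_biUnion_le
    _ ≤ ∑ _p ∈ (Finset.univ : Finset α).offDiag, n ^ (Fintype.card α - 1) := by
        apply Finset.sum_le_sum
        intro p hp
        exact hone p.1 p.2 (Finset.mem_offDiag.mp hp).2.2
    _ = (Finset.univ : Finset α).offDiag.card * n ^ (Fintype.card α - 1) := by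
        rw [Finset.sum_const, smul_eq_mul]
    _ ≤ (Fintype.card α)^2 * n ^ (Fintype.card α - 1) := by
        apply Nat.mul_le_mul_right
        rw [Finset.offDiag_card, Finset.card_univ]
        calc Fintype.card α * Fintype.card α - Fintype.card α
            ≤ Fintype.card α * Fintype.card α := Nat.sub_le _ _
          _ = (Fintype.card α)^2 := (sq (Fintype.card α)).symm
    
lemma edges_empty_zero {r : ℕ} (hr : 0 < r) (H : HGraph r (Fin 0)) : H.edges = ∅ := by
  ext e
  simp only [Finset.notMem_empty, iff_false]
  intro he
  have h1 := H.uniform e he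
  have h2 : e = ∅ := Finset.eq_empty_of_forall_notMem (fun x _ => x.elim0)
  rw [h2] at h1
  simp at h1
  omega

lemma exNum_le {r : ℕ} {γ : Type} (n : ℕ) (G : HGraph r γ) (B : ℕ)
    (hB : ∀ H : HGraph r (Fin n), ¬ H.ContainsCopy G → H.edges.card ≤ B) :
    exNum n G ≤ B := by
  apply csSup_le'
  rintro m ⟨H, rfl, hH⟩
  exact hB H hH

end Aux2
section Aux3

variable {k n : ℕ}

lemma claim_copy {α : Type} [Fintype α] [DecidableEq α] (F : HGraph k α) {t : ℕ}
    (H : HGraph (k+1) (Fin n)) (hnc : ¬ H.ContainsCopy (F.cone t))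
    (φ : α → Fin n) (hφ : Function.Injective φ) :
    (Finset.univ.filter fun v => φ ∈ homFinset F (link H v)).card < Fintype.card α + t := by
  classical
  by_contra hge
  push_neg at hge
  set S := Finset.univ.filter fun v => φ ∈ homFinset F (link H v) with hS
  have himg : (Finset.univ.image φ).card = Fintype.card α := by
    rw [Finset.card_image_of_injective _ hφ, Finset.card_univ]
  have ht' : t ≤ (S \ Finset.univ.image φ).card := by
    have h := Finset.le_card_sdiff (Finset.univ.image φ) S
    omega
  obtain ⟨T, hTsub, hTcard⟩ := Finset.exists_subset_card_eq ht'
  have hTS : T ⊆ S := hTsub.trans (Finset.sdiff_subset)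
  have hTim : ∀ x ∈ T, x ∉ Finset.univ.image φ := fun x hx => (Finset.mem_sdiff.mp (hTsub hx)).2
  set ψ : Fin t → Fin n := ⇑(T.orderEmbOfFin hTcard) with hψ
  have hψT : ∀ i, ψ i ∈ T := by
    intro i
    have hr : ψ i ∈ Set.range ψ := Set.mem_range_self i
    rw [hψ, Finset.range_orderEmbOfFin] at hr
    exact hr
  apply hnc
  refine ⟨Sum.elim φ ψ, ?_, ?_⟩
  · intro x y hxy
    match x, y with
    | Sum.inl a, Sum.inl b => exact congrArg Sum.inl (hφ hxy)
    | Sum.inr a, Sum.inr b =>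
        exact congrArg Sum.inr ((T.orderEmbOfFin hTcard).injective hxy)
    | Sum.inl a, Sum.inr b =>
        exact absurd (Finset.mem_image.mpr ⟨a, Finset.mem_univ _, hxy⟩) (hTim _ (hψT b))
    | Sum.inr a, Sum.inl b =>
        exact absurd (Finset.mem_image.mpr ⟨b, Finset.mem_univ _, hxy.symm⟩) (hTim _ (hψT a))
  · intro e he
    simp only [HGraph.cone, linkCone, Finset.mem_biUnion, Finset.mem_univ, true_and,
      Finset.mem_image] at he
    obtain ⟨i, f, hfF, rfl⟩ := he
    rw [Finset.image_insert, Finset.image_image]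
    have hcomp : (Sum.elim φ ψ) ∘ Sum.inl = φ := rfl
    rw [hcomp]
    have hvS : ψ i ∈ S := hTS (hψT i)
    have hhom : φ ∈ homFinset F (link H (ψ i)) := (Finset.mem_filter.mp hvS).2
    have hfe : f.image φ ∈ (link H (ψ i)).edges := (mem_homFinset.mp hhom) f hfF
    have hlm := link_mem hfe
    simpa using hlm.2

end Aux3
section Aux4

variable {k n : ℕ}

lemma filter_univ_mem' {β : Type} [Fintype β] [DecidableEq β] (s : Finset β) :
    Finset.univ.filter (fun x => x ∈ s) = s := by
  ext x; simp

lemma sum_link_degrees (H : HGraph (k+1) (Fin n)) :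
    ∑ v : Fin n, (H.edges.filter fun e => v ∈ e).card = (k+1) * H.edges.card := by
  classical
  have h1 : ∀ v : Fin n, (H.edges.filter fun e => v ∈ e).card
      = ∑ e ∈ H.edges, if v ∈ e then 1 else 0 := fun v => Finset.card_filter _ _
  simp_rw [h1]
  rw [Finset.sum_comm]
  have h2 : ∀ e ∈ H.edges, (∑ v : Fin n, if v ∈ e then 1 else 0) = k + 1 := by
    intro e he
    rw [← Finset.card_filter, filter_univ_mem', H.uniform e he]
  rw [Finset.sum_congr rfl h2, Finset.sum_const, smul_eq_mul, mul_comm]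

lemma sum_homCount_swap {α : Type} [Fintype α] [DecidableEq α] (F : HGraph k α)
    (H : HGraph (k+1) (Fin n)) :
    ∑ v : Fin n, homCount F (link H v)
      = ∑ φ : α → Fin n, (Finset.univ.filter fun v => φ ∈ homFinset F (link H v)).card := by
  classical
  have h1 : ∀ v : Fin n, homCount F (link H v)
      = ∑ φ : α → Fin n, if φ ∈ homFinset F (link H v) then 1 else 0 := by
    intro v
    rw [homCount, ← filter_univ_mem' (homFinset F (link H v)), Finset.card_filter]
    simp [Finset.mem_filter]
  have h2 : ∀ φ : α → Fin n, (Finset.univ.filter fun v => φ ∈ homFinset F (link H v)).card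
      = ∑ v : Fin n, if φ ∈ homFinset F (link H v) then 1 else 0 := fun φ =>
    Finset.card_filter _ _
  simp_rw [h1, h2]
  rw [Finset.sum_comm]

lemma sum_homCount_le {α : Type} [Fintype α] [DecidableEq α] (F : HGraph k α) {t : ℕ}
    (H : HGraph (k+1) (Fin n)) (hnc : ¬ H.ContainsCopy (F.cone t))
    (hα : 1 ≤ Fintype.card α) :
    ∑ v : Fin n, homCount F (link H v)
      ≤ (Fintype.card α + t + (Fintype.card α)^2) * n ^ (Fintype.card α) := by
  classical
  set vF := Fintype.card α with hvF
  rw [sum_homCount_swap]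
  rw [← Finset.sum_filter_add_sum_filter_not Finset.univ (fun φ : α → Fin n => Function.Injective φ)]
  have hb1 : ∑ φ ∈ Finset.univ.filter (fun φ : α → Fin n => Function.Injective φ),
      (Finset.univ.filter fun v => φ ∈ homFinset F (link H v)).card ≤ (vF + t) * n ^ vF := by
    calc ∑ φ ∈ Finset.univ.filter (fun φ : α → Fin n => Function.Injective φ),
        (Finset.univ.filter fun v => φ ∈ homFinset F (link H v)).card
        ≤ (Finset.univ.filter (fun φ : α → Fin n => Function.Injective φ)).card • (vF + t) := by
          apply Finset.sum_le_card_nsmul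
          intro φ hφ
          simp only [Finset.mem_filter, Finset.mem_univ, true_and] at hφ
          exact (claim_copy F H hnc φ hφ).le
      _ ≤ n ^ vF * (vF + t) := by
          rw [smul_eq_mul]
          apply Nat.mul_le_mul_right
          calc (Finset.univ.filter (fun φ : α → Fin n => Function.Injective φ)).card
              ≤ (Finset.univ : Finset (α → Fin n)).card := Finset.card_filter_le _ _
            _ = n ^ vF := by rw [Finset.card_univ, Fintype.card_fun, Fintype.card_fin]
      _ = (vF + t) * n ^ vF := mul_comm _ _
  have hb2 : ∑ φ ∈ Finset.univ.filter (fun φ : α → Fin n => ¬ Function.Injective φ),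
      (Finset.univ.filter fun v => φ ∈ homFinset F (link H v)).card ≤ vF^2 * n ^ vF := by
    calc ∑ φ ∈ Finset.univ.filter (fun φ : α → Fin n => ¬ Function.Injective φ),
        (Finset.univ.filter fun v => φ ∈ homFinset F (link H v)).card
        ≤ (Finset.univ.filter (fun φ : α → Fin n => ¬ Function.Injective φ)).card • n := by
          apply Finset.sum_le_card_nsmul
          intro φ _
          calc (Finset.univ.filter fun v => φ ∈ homFinset F (link H v)).card
              ≤ (Finset.univ : Finset (Fin n)).card := Finset.card_filter_le _ _
            _ = n := by rw [Finset.card_univ, Fintype.card_fin]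
      _ ≤ (vF^2 * n ^ (vF - 1)) * n := by
          rw [smul_eq_mul]
          exact Nat.mul_le_mul_right _ (card_noninj n)
      _ = vF^2 * n ^ vF := by
          rw [mul_assoc, ← pow_succ]
          congr 2
          omega
  calc _ ≤ (vF + t) * n ^ vF + vF^2 * n ^ vF := Nat.add_le_add hb1 hb2
    _ = (vF + t + vF^2) * n ^ vF := by ring

end Aux4
section Aux5

variable {k n : ℕ}

lemma main_bound {α : Type} [Fintype α] [DecidableEq α] (F : HGraph k α)
    (hF : IsSidorenko F) {t : ℕ} (ht : 0 < t)
    (H : HGraph (k+1) (Fin n)) (hnc : ¬ H.ContainsCopy (F.cone t))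
    (hα : 1 ≤ Fintype.card α) (heF : 1 ≤ F.edges.card) (hn : 1 ≤ n) :
    ((H.edges.card : ℝ)) ^ (F.edges.card)
      ≤ ((Fintype.card α + t + (Fintype.card α)^2 : ℕ) : ℝ)
        * (n : ℝ) ^ ((k+1) * F.edges.card - 1) := by
  classical
  set vF := Fintype.card α with hvF
  set eF := F.edges.card with heFd
  set C1 : ℝ := ((vF + t + vF^2 : ℕ) : ℝ) with hC1
  have hn0 : (0:ℝ) < (n:ℝ) := by exact_mod_cast hn
  set d : Fin n → ℝ := fun v => ((H.edges.filter fun e => v ∈ e).card : ℝ) with hd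
  -- Step 1: pointwise Sidorenko bound
  have key1 : ∀ v : Fin n, (d v)^eF * (n:ℝ)^vF
      ≤ (homCount F (link H v) : ℝ) * (n:ℝ)^(k*eF) := by
    intro v
    have hD := hF (Fin n) (link H v)
    rw [ge_iff_le, homDensity, edgeDensity, homDensity] at hD
    simp only [Fintype.card_fin] at hD
    have hdle : d v ≤ (homCount (KEdge k) (link H v) : ℝ) := by
      have h := le_homCount_KEdge (link H v)
      rw [link_card] at h
      show ((H.edges.filter fun e => v ∈ e).card : ℝ) ≤ _
      exact_mod_cast h
    have h2 : (d v / (n:ℝ)^k)^eF ≤ (homCount F (link H v):ℝ) / (n:ℝ)^vF := by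
      refine le_trans ?_ hD
      gcongr
    rw [div_pow, ← pow_mul] at h2
    rw [div_le_div_iff₀ (by positivity) (by positivity)] at h2
    exact h2
  -- Step 2: sum and cancel n^vF
  have key2 : (∑ v : Fin n, (d v)^eF) ≤ C1 * (n:ℝ)^(k*eF) := by
    have hsum : (∑ v : Fin n, (d v)^eF) * (n:ℝ)^vF
        ≤ (C1 * (n:ℝ)^(k*eF)) * (n:ℝ)^vF := by
      calc (∑ v : Fin n, (d v)^eF) * (n:ℝ)^vF
          = ∑ v : Fin n, (d v)^eF * (n:ℝ)^vF := by rw [Finset.sum_mul]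
        _ ≤ ∑ v : Fin n, (homCount F (link H v) : ℝ) * (n:ℝ)^(k*eF) :=
            Finset.sum_le_sum fun v _ => key1 v
        _ = (∑ v : Fin n, (homCount F (link H v) : ℝ)) * (n:ℝ)^(k*eF) := by
            rw [Finset.sum_mul]
        _ ≤ C1 * (n:ℝ)^vF * (n:ℝ)^(k*eF) := by
            apply mul_le_mul_of_nonneg_right _ (by positivity)
            have hc := sum_homCount_le F H hnc hα
            calc (∑ v : Fin n, (homCount F (link H v) : ℝ))
                = ((∑ v : Fin n, homCount F (link H v) : ℕ) : ℝ) := by push_cast; rfl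
              _ ≤ (((vF + t + vF^2) * n ^ vF : ℕ) : ℝ) := by exact_mod_cast hc
              _ = C1 * (n:ℝ)^vF := by simp only [hC1]; push_cast; ring
        _ = (C1 * (n:ℝ)^(k*eF)) * (n:ℝ)^vF := by ring
    exact le_of_mul_le_mul_right hsum (by positivity)
  -- Step 3: convexity
  have key3 : (((k+1) * H.edges.card : ℕ) : ℝ)^eF / (n:ℝ)^(eF - 1)
      ≤ ∑ v : Fin n, (d v)^eF := by
    have hcv := pow_sum_div_card_le_sum_pow
      (s := (Finset.univ : Finset (Fin n))) (f := d)
      (fun v _ => by positivity) (eF - 1)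
    have heq : eF - 1 + 1 = eF := by omega
    rw [heq] at hcv
    have hsd : (∑ v : Fin n, d v) = (((k+1) * H.edges.card : ℕ) : ℝ) := by
      rw [hd]
      push_cast [← sum_link_degrees H]
      rfl
    rw [hsd, Finset.card_univ, Fintype.card_fin] at hcv
    exact hcv
  -- Combine
  have key4 : (((k+1) * H.edges.card : ℕ) : ℝ)^eF ≤ C1 * (n:ℝ)^((k+1)*eF - 1) := by
    have h := le_trans key3 key2
    rw [div_le_iff₀ (by positivity)] at h
    calc (((k+1) * H.edges.card : ℕ) : ℝ)^eF
        ≤ C1 * (n:ℝ)^(k*eF) * (n:ℝ)^(eF - 1) := h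
      _ = C1 * (n:ℝ)^((k+1)*eF - 1) := by
          rw [mul_assoc, ← pow_add]
          have hee : k*eF + (eF - 1) = (k+1)*eF - 1 := by
            have h2 : (k+1)*eF = k*eF + eF := by ring
            rw [h2]
            omega
          rw [hee]
  refine le_trans ?_ key4
  apply pow_le_pow_left₀ (by positivity)
  have : H.edges.card ≤ (k+1) * H.edges.card := Nat.le_mul_of_pos_left _ (by omega)
  exact_mod_cast this

lemma rpow_step {x C : ℝ} {n N E : ℕ} (hx : 0 ≤ x) (hC : 1 ≤ C) (hE : 1 ≤ E)
    (h : x ^ E ≤ C * (n:ℝ)^N) : x ≤ C * (n:ℝ) ^ ((N:ℝ)/(E:ℝ)) := by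
  have hEr : (0:ℝ) < (E:ℝ) := by exact_mod_cast hE
  have h1 := Real.rpow_le_rpow (by positivity) h
    (le_of_lt (by positivity : (0:ℝ) < 1/(E:ℝ)))
  rw [← Real.rpow_natCast x E, ← Real.rpow_mul hx] at h1
  rw [mul_one_div_cancel (ne_of_gt hEr), Real.rpow_one] at h1
  rw [Real.mul_rpow (by linarith) (by positivity)] at h1
  rw [← Real.rpow_natCast (n:ℝ) N, ← Real.rpow_mul (by positivity)] at h1
  have hCle : C ^ ((1:ℝ)/(E:ℝ)) ≤ C := by
    calc C ^ ((1:ℝ)/(E:ℝ)) ≤ C ^ (1:ℝ) := by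
          apply Real.rpow_le_rpow_of_exponent_le hC
          rw [div_le_one hEr]
          exact_mod_cast hE
      _ = C := Real.rpow_one C
  calc x ≤ C ^ ((1:ℝ)/(E:ℝ)) * (n:ℝ)^((N:ℝ) * (1/(E:ℝ))) := h1
    _ ≤ C * (n:ℝ)^((N:ℝ) * (1/(E:ℝ))) :=
        mul_le_mul_of_nonneg_right hCle (Real.rpow_nonneg (by positivity) _)
    _ = C * (n:ℝ)^((N:ℝ)/(E:ℝ)) := by rw [mul_one_div]

end Aux5
/-- If `F` is a Sidorenko `(r−1)`-graph then
`ex(n, F(t)) ≤ O_{F,t}(n^{r − 1/e(F)})`. -/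
theorem stmt10 {k : ℕ} (hk : 1 ≤ k) {α : Type} [Fintype α] [DecidableEq α]
    (F : HGraph k α) (hF : IsSidorenko F) (t : ℕ) (ht : 0 < t) :
    ∃ C : ℝ, 0 < C ∧ ∀ n : ℕ,
      (exNum n (F.cone t) : ℝ) ≤
        C * (n : ℝ) ^ ((k + 1 : ℝ) - 1 / (F.edges.card : ℝ)) := by
  classical
  by_cases heF0 : F.edges.card = 0
  · -- degenerate case : F has no edges
    have hFe : F.edges = ∅ := Finset.card_eq_zero.mp heF0
    have hexp : ((k + 1 : ℝ) - 1 / (F.edges.card : ℝ)) = (k+1 : ℝ) := by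
      rw [heF0]
      norm_num
    have hconeE : (F.cone t).edges = ∅ := by
      ext e
      simp [HGraph.cone, linkCone, hFe]
    refine ⟨(2:ℝ)^(Fintype.card α + t), by positivity, ?_⟩
    intro n
    rcases Nat.eq_zero_or_pos n with rfl | hn
    · have h0 : exNum 0 (F.cone t) ≤ 0 := by
        apply exNum_le
        intro H _
        rw [edges_empty_zero (by omega) H]
        simp
      have : exNum 0 (F.cone t) = 0 := Nat.le_zero.mp h0
      rw [this, hexp]
      push_cast
      positivity
    · have hb : exNum n (F.cone t) ≤ 2^(Fintype.card α + t) := by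
        apply exNum_le
        intro H hnc
        by_cases hbig : Fintype.card α + t ≤ n
        · exfalso
          apply hnc
          have hcard : Fintype.card (α ⊕ Fin t) ≤ Fintype.card (Fin n) := by
            rw [Fintype.card_sum, Fintype.card_fin, Fintype.card_fin]
            exact hbig
          obtain ⟨f⟩ := Function.Embedding.nonempty_of_card_le hcard
          exact ⟨f, f.injective, by simp [hconeE]⟩
        · calc H.edges.card ≤ (Finset.univ : Finset (Finset (Fin n))).card :=
                Finset.card_le_univ _
            _ = 2 ^ n := by rw [Finset.card_univ, Fintype.card_finset, Fintype.card_fin]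
            _ ≤ 2 ^ (Fintype.card α + t) := Nat.pow_le_pow_right (by norm_num) (by omega)
      rw [hexp]
      have hpow1 : (1:ℝ) ≤ (n:ℝ) ^ (k+1 : ℝ) := by
        calc (1:ℝ) = (1:ℝ) ^ (k+1:ℝ) := (Real.one_rpow _).symm
          _ ≤ (n:ℝ) ^ (k+1:ℝ) := by
              apply Real.rpow_le_rpow (by norm_num) (by exact_mod_cast hn) (by positivity)
      calc (exNum n (F.cone t) : ℝ) ≤ ((2:ℝ)^(Fintype.card α + t)) := by exact_mod_cast hb
        _ = ((2:ℝ)^(Fintype.card α + t)) * 1 := (mul_one _).symm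
        _ ≤ ((2:ℝ)^(Fintype.card α + t)) * (n:ℝ) ^ (k+1:ℝ) := by
            apply mul_le_mul_of_nonneg_left hpow1 (by positivity)
  · -- main case : F has at least one edge
    have heF1 : 1 ≤ F.edges.card := Nat.one_le_iff_ne_zero.mpr heF0
    have hα : Nonempty α := by
      obtain ⟨e0, he0⟩ := Finset.card_pos.mp (by omega : 0 < F.edges.card)
      have he0ne : e0.Nonempty := Finset.card_pos.mp (by rw [F.uniform e0 he0]; omega)
      exact ⟨he0ne.choose⟩
    have hvF1 : 1 ≤ Fintype.card α := Fintype.card_pos_iff.mpr hα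
    set C1 : ℝ := ((Fintype.card α + t + (Fintype.card α)^2 : ℕ) : ℝ) with hC1
    have hC1ge : (1:ℝ) ≤ C1 := by
      rw [hC1]
      exact_mod_cast (by omega : 1 ≤ Fintype.card α + t + (Fintype.card α)^2)
    have heFr : (1:ℝ) ≤ (F.edges.card : ℝ) := by exact_mod_cast heF1
    have hexppos : (0:ℝ) < (k + 1 : ℝ) - 1 / (F.edges.card : ℝ) := by
      have h1 : 1 / (F.edges.card : ℝ) ≤ 1 := by
        rw [div_le_one (by linarith)]
        exact heFr
      have hk1 : (2:ℝ) ≤ (k+1:ℝ) := by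
        have : (2:ℕ) ≤ k+1 := by omega
        exact_mod_cast this
      linarith
    refine ⟨C1, by linarith, ?_⟩
    intro n
    rcases Nat.eq_zero_or_pos n with rfl | hn
    · have h0 : exNum 0 (F.cone t) = 0 := by
        apply Nat.le_zero.mp
        apply exNum_le
        intro H _
        rw [edges_empty_zero (by omega) H]
        simp
      rw [h0]
      rw [show ((0:ℕ):ℝ) = (0:ℝ) by norm_num, Real.zero_rpow (ne_of_gt hexppos)]
      norm_num
    · -- the real bound for each extremal graph
      have hbound : ∀ H : HGraph (k+1) (Fin n), ¬ H.ContainsCopy (F.cone t) →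
          (H.edges.card : ℝ) ≤ C1 * (n:ℝ) ^ ((k + 1 : ℝ) - 1 / (F.edges.card : ℝ)) := by
        intro H hnc
        have hm := main_bound F hF ht H hnc hvF1 heF1 hn
        have hr := rpow_step (x := (H.edges.card : ℝ)) (C := C1)
          (n := n) (N := (k+1) * F.edges.card - 1) (E := F.edges.card)
          (by positivity) hC1ge heF1 hm
        have hexpeq : ((((k+1) * F.edges.card - 1 : ℕ) : ℝ)) / (F.edges.card : ℝ)
            = (k + 1 : ℝ) - 1 / (F.edges.card : ℝ) := by
          have hge : 1 ≤ (k+1) * F.edges.card := by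
            calc 1 ≤ F.edges.card := heF1
              _ ≤ (k+1) * F.edges.card := Nat.le_mul_of_pos_left _ (by omega)
          rw [Nat.cast_sub hge]
          push_cast
          field_simp
        rwa [hexpeq] at hr
      -- transfer to exNum via floor
      set R : ℝ := C1 * (n:ℝ) ^ ((k + 1 : ℝ) - 1 / (F.edges.card : ℝ)) with hR
      have hR0 : 0 ≤ R := by
        rw [hR]
        positivity
      have hfl : exNum n (F.cone t) ≤ ⌊R⌋₊ := by
        apply exNum_le
        intro H hnc
        exact Nat.le_floor (hbound H hnc)
      calc (exNum n (F.cone t) : ℝ) ≤ (⌊R⌋₊ : ℝ) := by exact_mod_cast hfl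
        _ ≤ R := Nat.floor_le hR0
end

section
/- For every integer k ≥ 2, the tensor product C_{2k} ⊗ C_{2k} contains the (k × k)-grid graph as a subgraph. Concretely, identifying V(C_{2k} ⊗ C_{2k}) with [2k] × [2k] where (i,j) is adjacent to (i',j') iff |i − i'| ≡ 1 (mod 2k) and |j − j'| ≡ 1 (mod 2k), the induced subgraph on U = {(k + i − j − 1, i + j − 1) : i, j ∈ [k]} (coordinates taken mod 2k) is isomorphic to the (k × k)-grid. -/
/-- The tensor (categorical) product of two simple graphs:
`(a₁,b₁) ~ (a₂,b₂)` iff `a₁ ~ a₂` and `b₁ ~ b₂`. -/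
def SimpleGraph.tensor {V W : Type*} (G : SimpleGraph V) (H : SimpleGraph W) :
    SimpleGraph (V × W) where
  Adj p q := G.Adj p.1 q.1 ∧ H.Adj p.2 q.2
  symm := by refine ⟨?_⟩; rintro p q ⟨h1, h2⟩; exact ⟨h1.symm, h2.symm⟩
  loopless := by refine ⟨?_⟩; rintro p ⟨h1, -⟩; exact G.loopless.irrefl _ h1

instance {V W : Type*} (G : SimpleGraph V) (H : SimpleGraph W)
    [DecidableRel G.Adj] [DecidableRel H.Adj] : DecidableRel (G.tensor H).Adj :=
  fun p q => inferInstanceAs (Decidable (G.Adj p.1 q.1 ∧ H.Adj p.2 q.2))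

/-- The cycle of length `n`, with vertex set `ZMod n` and `i ~ j` iff `i − j ≡ ±1`. -/
def cycleZMod (n : ℕ) : SimpleGraph (ZMod n) where
  Adj i j := i ≠ j ∧ (i - j = 1 ∨ j - i = 1)
  symm := by refine ⟨?_⟩; rintro i j ⟨hne, h⟩; exact ⟨hne.symm, h.symm⟩
  loopless := by refine ⟨?_⟩; rintro i ⟨hne, -⟩; exact hne rfl

instance (n : ℕ) : DecidableRel (cycleZMod n).Adj :=
  fun i j => inferInstanceAs (Decidable (i ≠ j ∧ (i - j = 1 ∨ j - i = 1)))


/-- The `(k × k)`-grid: the Cartesian product of two paths on `k` vertices, on vertex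
set `Fin k × Fin k` with `(i,j) ~ (i',j')` iff `|i−i'| + |j−j'| = 1`. -/
def gridGraph (k : ℕ) : SimpleGraph (Fin k × Fin k) where
  Adj p q := (p.1 = q.1 ∧ ((p.2 : ℕ) + 1 = q.2 ∨ (q.2 : ℕ) + 1 = p.2)) ∨
    (p.2 = q.2 ∧ ((p.1 : ℕ) + 1 = q.1 ∨ (q.1 : ℕ) + 1 = p.1))
  symm := by
    refine ⟨?_⟩
    rintro p q (⟨h, h2⟩ | ⟨h, h2⟩)
    exacts [Or.inl ⟨h.symm, h2.symm⟩, Or.inr ⟨h.symm, h2.symm⟩]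
  loopless := by refine ⟨?_⟩; rintro p (⟨-, h | h⟩ | ⟨-, h | h⟩) <;> omega

/-- The vertex of `C_{2k} ⊗ C_{2k}` corresponding to the grid point `(i,j)`
(0-based; in the 1-based indexing of the paper this is `(k + i − j − 1, i + j − 1)`). -/
def gridEmbed (k n : ℕ) (p : Fin k × Fin k) : ZMod n × ZMod n :=
  ((k : ZMod n) + (p.1 : ℕ) - (p.2 : ℕ) - 1, ((p.1 : ℕ) : ZMod n) + (p.2 : ℕ) + 1)

-- auxiliary lemmas

lemma aux_dvd {n : ℕ} {x y : ℤ} (h : ((x : ZMod n)) = (y : ZMod n)) : (n : ℤ) ∣ (y - x) :=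
  ((ZMod.intCast_eq_intCast_iff x y n).mp h).dvd

lemma aux_eq {n : ℕ} {x y : ℤ} (h : ((x : ZMod n)) = (y : ZMod n))
    (hb1 : -(n : ℤ) < y - x) (hb2 : y - x < n) : x = y := by
  have := Int.eq_zero_of_abs_lt_dvd (aux_dvd h) (abs_lt.mpr ⟨hb1, hb2⟩)
  omega

lemma aux_cycle {k : ℕ} (hk : 2 ≤ k) (a b : ℤ) (hb1 : a - b ≤ 2 * k - 2) (hb2 : b - a ≤ 2 * k - 2) :
    (cycleZMod (2 * k)).Adj (a : ZMod (2 * k)) (b : ZMod (2 * k)) ↔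
      (a - b = 1 ∨ a - b = -1) := by
  constructor
  · rintro ⟨hne, h | h⟩
    · left
      have h1 : ((a - b : ℤ) : ZMod (2 * k)) = ((1 : ℤ) : ZMod (2 * k)) := by
        push_cast; rw [h]
      exact aux_eq h1 (by push_cast; omega) (by push_cast; omega)
    · right
      have h1 : ((a - b : ℤ) : ZMod (2 * k)) = ((-1 : ℤ) : ZMod (2 * k)) := by
        push_cast; rw [show ((a : ZMod (2*k)) - b) = -((b:ZMod (2*k)) - a) by ring, h]
      exact aux_eq h1 (by push_cast; omega) (by push_cast; omega)
  · intro h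
    have hne : (a : ZMod (2 * k)) ≠ (b : ZMod (2 * k)) := by
      intro he
      have := Int.eq_zero_of_abs_lt_dvd (aux_dvd he) (abs_lt.mpr (by constructor <;> push_cast <;> omega))
      omega
    rcases h with h | h
    · refine ⟨hne, Or.inl ?_⟩
      have : ((a - b : ℤ) : ZMod (2 * k)) = ((1 : ℤ) : ZMod (2 * k)) := by rw [h]
      push_cast at this; convert this using 1 <;> push_cast <;> ring
    · refine ⟨hne, Or.inr ?_⟩
      have : ((b - a : ℤ) : ZMod (2 * k)) = ((1 : ℤ) : ZMod (2 * k)) := by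
        rw [show b - a = 1 by omega]
      push_cast at this; convert this using 1 <;> push_cast <;> ring

/-- For `k ≥ 2`, `C_{2k} ⊗ C_{2k}` (on `ZMod (2k) × ZMod (2k)`) contains the
`(k × k)`-grid as a subgraph: the map `(i,j) ↦ (k + i − j − 1, i + j − 1)` is injective
and identifies the grid with the induced subgraph on its image `U`. -/
theorem stmt15 (k n : ℕ) (hk : 2 ≤ k) (hn : n = 2 * k) [NeZero n] :
    Function.Injective (gridEmbed k n) ∧
    ∀ p q : Fin k × Fin k,
      (gridGraph k).Adj p q ↔
        ((cycleZMod n).tensor (cycleZMod n)).Adj (gridEmbed k n p) (gridEmbed k n q) := by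
  subst hn
  have hemb : ∀ i j : Fin k, gridEmbed k (2 * k) (i, j) =
      ((((k : ℤ) + (i : ℕ) - (j : ℕ) - 1 : ℤ) : ZMod (2 * k)),
       ((((i : ℕ) : ℤ) + (j : ℕ) + 1 : ℤ) : ZMod (2 * k))) := by
    intro i j
    simp only [gridEmbed, Prod.mk.injEq]
    constructor <;> push_cast <;> ring
  constructor
  · rintro ⟨i1, j1⟩ ⟨i2, j2⟩ h
    rw [hemb, hemb] at h
    obtain ⟨h1, h2⟩ := Prod.mk.injEq .. ▸ h
    have b1 : (i1 : ℕ) < k := i1.2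
    have b2 : (j1 : ℕ) < k := j1.2
    have b3 : (i2 : ℕ) < k := i2.2
    have b4 : (j2 : ℕ) < k := j2.2
    have e1 := aux_eq h1 (by push_cast; omega) (by push_cast; omega)
    have e2 := aux_eq h2 (by push_cast; omega) (by push_cast; omega)
    have : (i1 : ℕ) = i2 ∧ (j1 : ℕ) = j2 := by push_cast at e1 e2; omega
    obtain ⟨hi, hj⟩ := this
    exact Prod.ext (Fin.ext hi) (Fin.ext hj)
  · rintro ⟨i1, j1⟩ ⟨i2, j2⟩
    rw [hemb, hemb]
    have b1 : (i1 : ℕ) < k := i1.2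
    have b2 : (j1 : ℕ) < k := j1.2
    have b3 : (i2 : ℕ) < k := i2.2
    have b4 : (j2 : ℕ) < k := j2.2
    have A1 := aux_cycle hk ((k : ℤ) + (i1 : ℕ) - (j1 : ℕ) - 1)
      ((k : ℤ) + (i2 : ℕ) - (j2 : ℕ) - 1) (by push_cast; omega) (by push_cast; omega)
    have A2 := aux_cycle hk (((i1 : ℕ) : ℤ) + (j1 : ℕ) + 1)
      (((i2 : ℕ) : ℤ) + (j2 : ℕ) + 1) (by push_cast; omega) (by push_cast; omega)
    show _ ↔ (cycleZMod (2*k)).Adj _ _ ∧ (cycleZMod (2*k)).Adj _ _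
    rw [A1, A2]
    show (⟨i1,j1⟩ : Fin k × Fin k).1 = _ ∧ _ ∨ _ ↔ _
    simp only
    constructor
    · rintro (⟨h, h2 | h2⟩ | ⟨h, h2 | h2⟩) <;>
        rw [Fin.ext_iff] at h <;> push_cast <;> omega
    · rintro ⟨h1 | h1, h2 | h2⟩ <;>
        [ (right; refine ⟨Fin.ext ?_, ?_⟩); (left; refine ⟨Fin.ext ?_, ?_⟩);
          (left; refine ⟨Fin.ext ?_, ?_⟩); (right; refine ⟨Fin.ext ?_, ?_⟩)] <;>
        push_cast at h1 h2 ⊢ <;> omega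
end
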